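/- arXiv:2006.05130 — 11 statements merged into one kernel-verified Lean document; each statement's English description precedes it below -/
import Mathlib

section
/- Let p be a positive integer and b > 0. Then for every real x ≤ b one has T_{p+1}(x) ≤ (max(x^p, 0) / b^p) · T_{p+1}(b). -/
open Real Finset

/-- `T p x = exp x - ∑_{j=0}^{p-2} x^j / j!`, the Taylor remainder of the exponential
function of order `p - 2` at `0` (empty sum convention gives `T 1 x = exp x`). -/
noncomputable def T (p : ℕ) (x : ℝ) : ℝ :=
  Real.exp x - ∑ j ∈ Finset.range (p - 1), x ^ j / (j.factorial : ℝ)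

lemma sum_hasDerivAt (p : ℕ) (y : ℝ) :
    HasDerivAt (fun y : ℝ => ∑ j ∈ Finset.range (p + 1), y ^ j / (j.factorial : ℝ))
      (∑ j ∈ Finset.range p, y ^ j / (j.factorial : ℝ)) y := by
  have h : HasDerivAt (fun y : ℝ => ∑ j ∈ Finset.range (p + 1), y ^ j / (j.factorial : ℝ))
      (∑ j ∈ Finset.range (p + 1), (j : ℝ) * y ^ (j - 1) / (j.factorial : ℝ)) y := by
    apply HasDerivAt.fun_sum
    intro j _
    simpa using (hasDerivAt_pow j y).div_const (j.factorial : ℝ)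
  convert h using 1
  rw [Finset.sum_range_succ' _ p]
  have h0 : ((0 : ℕ) : ℝ) * y ^ (0 - 1) / ((0 : ℕ).factorial : ℝ) = 0 := by simp
  rw [h0, add_zero]
  apply Finset.sum_congr rfl
  intro i _
  have hfe : ((i + 1 : ℕ).factorial : ℝ) = (i + 1 : ℕ) * (i.factorial : ℝ) := by
    rw [Nat.factorial_succ]; push_cast; ring
  rw [hfe]
  rw [Nat.add_sub_cancel]
  have hfac : (i.factorial : ℝ) ≠ 0 := by positivity
  have hi1 : ((i + 1 : ℕ) : ℝ) ≠ 0 := by positivity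
  field_simp

lemma T_eq (n : ℕ) (x : ℝ) :
    T (n + 2) x = Real.exp x - ∑ j ∈ Finset.range (n + 1), x ^ j / (j.factorial : ℝ) := rfl

lemma T_zero (n : ℕ) : T (n + 2) 0 = 0 := by
  rw [T_eq, Finset.sum_range_succ' _ n]
  simp

lemma repr1 (n : ℕ) (x : ℝ) :
    Real.exp (-x) * T (n + 2) x = (∫ s in (0:ℝ)..x, Real.exp (-s) * s ^ n) / n.factorial := by
  have key : ∀ y : ℝ, HasDerivAt (fun y : ℝ => Real.exp (-y) * T (n + 2) y)
      (Real.exp (-y) * y ^ n / n.factorial) y := by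
    intro y
    have he : HasDerivAt (fun y : ℝ => Real.exp (-y)) (-Real.exp (-y)) y := by
      simpa using (hasDerivAt_neg y).exp
    have hS := sum_hasDerivAt n y
    have hT : HasDerivAt (T (n + 2))
        (Real.exp y - ∑ j ∈ Finset.range n, y ^ j / (j.factorial : ℝ)) y := by
      have := (Real.hasDerivAt_exp y).sub hS
      exact this
    have hprod := he.mul hT
    refine hprod.congr_deriv ?_
    rw [T_eq, Finset.sum_range_succ _ n]
    have hfac : (n.factorial : ℝ) ≠ 0 := by positivity
    field_simp
    ring
  have hcont : Continuous fun s : ℝ => Real.exp (-s) * s ^ n / n.factorial := by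
    fun_prop
  have hint := intervalIntegral.integral_eq_sub_of_hasDerivAt
    (f := fun y : ℝ => Real.exp (-y) * T (n + 2) y)
    (f' := fun y : ℝ => Real.exp (-y) * y ^ n / n.factorial)
    (fun t _ => key t) (hcont.intervalIntegrable 0 x)
  rw [intervalIntegral.integral_div] at hint
  rw [hint]
  simp [T_zero]

lemma repr2 (n : ℕ) (x : ℝ) :
    T (n + 2) x = x ^ (n + 1) * (∫ t in (0:ℝ)..1, Real.exp (x * (1 - t)) * t ^ n)
      / n.factorial := by
  rcases eq_or_ne x 0 with rfl | hx
  · simp [T_zero]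
  · have h1 := repr1 n x
    have hsub : (∫ t in (0:ℝ)..1, Real.exp (-(t * x)) * (t * x) ^ n)
        = x⁻¹ • ∫ s in (0:ℝ)..x, Real.exp (-s) * s ^ n := by
      have := intervalIntegral.integral_comp_mul_right
        (f := fun s : ℝ => Real.exp (-s) * s ^ n) (a := 0) (b := 1) (c := x) hx
      simpa using this
    have hJ : (∫ t in (0:ℝ)..1, Real.exp (x * (1 - t)) * t ^ n)
        = Real.exp x * ∫ t in (0:ℝ)..1, Real.exp (-(t * x)) * (t * x) ^ n / x ^ n := by
      rw [← intervalIntegral.integral_const_mul]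
      apply intervalIntegral.integral_congr
      intro t _
      dsimp only
      have hxn : (x : ℝ) ^ n ≠ 0 := pow_ne_zero _ hx
      have hee : Real.exp (x * (1 - t)) = Real.exp x * Real.exp (-(t * x)) := by
        rw [← Real.exp_add]; ring_nf
      rw [hee, mul_pow]
      field_simp
    have hmul : Real.exp x * Real.exp (-x) = 1 := by
      rw [← Real.exp_add]; simp
    have hTx : T (n + 2) x = Real.exp x * ((∫ s in (0:ℝ)..x, Real.exp (-s) * s ^ n)
        / n.factorial) := by
      rw [← h1, ← mul_assoc, hmul, one_mul]
    rw [hTx, hJ, intervalIntegral.integral_div, hsub]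
    have hxn : (x : ℝ) ^ n ≠ 0 := pow_ne_zero _ hx
    have hfac : (n.factorial : ℝ) ≠ 0 := by positivity
    field_simp
    rw [smul_eq_mul, pow_succ, one_div, mul_assoc (x ^ n), ← mul_assoc x x⁻¹, mul_inv_cancel₀ hx, one_mul]
    ring

theorem statement0 (p : ℕ) (hp : 1 ≤ p) (b : ℝ) (hb : 0 < b) (x : ℝ) (hx : x ≤ b) :
    T (p + 1) x ≤ max (x ^ p) 0 / b ^ p * T (p + 1) b := by
  obtain ⟨n, rfl⟩ : ∃ n, p = n + 1 := ⟨p - 1, (Nat.succ_pred_eq_of_pos hp).symm⟩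
  set J : ℝ → ℝ := fun y => ∫ t in (0:ℝ)..1, Real.exp (y * (1 - t)) * t ^ n with hJdef
  have hcont : ∀ y : ℝ, Continuous fun t : ℝ => Real.exp (y * (1 - t)) * t ^ n := by
    intro y; fun_prop
  have hJnonneg : ∀ y : ℝ, 0 ≤ J y := by
    intro y
    apply intervalIntegral.integral_nonneg (by norm_num)
    intro t ht
    have ht0 := ht.1
    positivity
  have hJmono : J x ≤ J b := by
    apply intervalIntegral.integral_mono_on (by norm_num)
      ((hcont x).intervalIntegrable 0 1) ((hcont b).intervalIntegrable 0 1)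
    intro t ht
    have h1t : 0 ≤ 1 - t := by linarith [ht.2]
    have hle : x * (1 - t) ≤ b * (1 - t) := mul_le_mul_of_nonneg_right hx h1t
    exact mul_le_mul_of_nonneg_right (Real.exp_le_exp.2 hle) (pow_nonneg ht.1 n)
  have hTx : T (n + 1 + 1) x = x ^ (n + 1) * J x / n.factorial := repr2 n x
  have hTb : T (n + 1 + 1) b = b ^ (n + 1) * J b / n.factorial := repr2 n b
  have hfac : (0 : ℝ) < (n.factorial : ℝ) := by positivity
  have hbp : (0 : ℝ) < b ^ (n + 1) := pow_pos hb _
  rcases le_or_gt (x ^ (n + 1)) 0 with hxp | hxp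
  · rw [max_eq_right hxp, hTx, zero_div, zero_mul]
    apply div_nonpos_of_nonpos_of_nonneg _ hfac.le
    exact mul_nonpos_of_nonpos_of_nonneg hxp (hJnonneg x)
  · have hrhs : x ^ (n + 1) / b ^ (n + 1) * (b ^ (n + 1) * J b / (n.factorial : ℝ))
        = x ^ (n + 1) * J b / (n.factorial : ℝ) := by
      field_simp
    rw [max_eq_left hxp.le, hTx, hTb, hrhs]
    have h0x : (0 : ℝ) ≤ x ^ (n + 1) := hxp.le
    gcongr
end

section
/- Let p be a positive integer, b > 0, and let X be a random variable with P(X ≤ b) = 1 and E|X|^p < ∞. Then for every s ≥ 0: E[exp(sX)] ≤ (E[max(X^p, 0)] / b^p) · (exp(sb) − ∑_{j=0}^{p−1} (sb)^j/j!) + E[∑_{j=0}^{p−1} s^j X^j / j!] = (E[max(X^p, 0)] / b^p) · T_{p+1}(sb) + E[∑_{j=0}^{p−1} s^j X^j / j!]. -/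
open Real Finset MeasureTheory

noncomputable def Rr (p : ℕ) (y : ℝ) : ℝ :=
  Real.exp y - ∑ j ∈ Finset.range p, y ^ j / (j.factorial : ℝ)

lemma hasDerivAt_powfac (p : ℕ) (y : ℝ) :
    HasDerivAt (fun x : ℝ => x ^ (p + 1) / ((p + 1).factorial : ℝ)) (y ^ p / (p.factorial : ℝ)) y := by
  have h := (hasDerivAt_pow (p + 1) y).div_const ((p + 1).factorial : ℝ)
  refine h.congr_deriv ?_
  rw [Nat.factorial_succ]
  push_cast
  have hp : (p.factorial : ℝ) ≠ 0 := Nat.cast_ne_zero.2 p.factorial_ne_zero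
  field_simp

lemma hasDerivAt_sumfac (p : ℕ) (y : ℝ) :
    HasDerivAt (fun x : ℝ => ∑ j ∈ Finset.range (p + 1), x ^ j / (j.factorial : ℝ))
      (∑ j ∈ Finset.range p, y ^ j / (j.factorial : ℝ)) y := by
  induction p with
  | zero => simpa using hasDerivAt_const y (1 : ℝ)
  | succ n ih =>
      have h2 := hasDerivAt_powfac n y
      have := ih.add h2
      simp only [Finset.sum_range_succ (n := n + 1)]
      exact this.congr_deriv (Finset.sum_range_succ _ _).symm

lemma hasDerivAt_Rr (p : ℕ) (y : ℝ) : HasDerivAt (Rr (p + 1)) (Rr p y) y := by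
  exact (Real.hasDerivAt_exp y).sub (hasDerivAt_sumfac p y)

lemma Rr_zero (p : ℕ) : Rr (p + 1) 0 = 0 := by
  simp [Rr, Finset.sum_range_succ']

lemma nonneg_of_deriv {F F' : ℝ → ℝ} (hF : ∀ x, HasDerivAt F (F' x) x) (h0 : F 0 = 0)
    (hd : ∀ x ≤ (0 : ℝ), F' x ≤ 0) : ∀ y ≤ (0 : ℝ), 0 ≤ F y := by
  intro y hy
  have hanti : AntitoneOn F (Set.Iic 0) := by
    apply antitoneOn_of_deriv_nonpos (convex_Iic 0)
    · exact fun x _ => (hF x).continuousAt.continuousWithinAt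
    · intro x hx
      exact ((hF x).differentiableAt).differentiableWithinAt
    · intro x hx
      rw [interior_Iic] at hx
      rw [(hF x).deriv]
      exact hd x hx.le
  have := hanti (Set.mem_Iic.2 hy) (Set.mem_Iic.2 le_rfl) hy
  rw [h0] at this
  exact this

lemma Rr_neg : ∀ p : ℕ, ∀ y : ℝ, y ≤ 0 →
    (Even p → 0 ≤ Rr p y ∧ Rr p y ≤ y ^ p / (p.factorial : ℝ)) ∧
    (Odd p → y ^ p / (p.factorial : ℝ) ≤ Rr p y ∧ Rr p y ≤ 0) := by
  intro p
  induction p with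
  | zero =>
      intro y hy
      constructor
      · intro _
        constructor
        · simp [Rr]; positivity
        · simpa [Rr] using Real.exp_le_one_iff.2 hy
      · intro h; exact absurd h (by simp)
  | succ n ih =>
      intro y hy
      constructor
      · -- n+1 even, n odd
        intro he
        have hn : Odd n := Nat.Even.sub_odd (Nat.one_le_iff_ne_zero.2 (by omega)) he odd_one
        -- lower: 0 ≤ Rr (n+1) y  via F = Rr (n+1), F' = Rr n ≤ 0
        have hlow : 0 ≤ Rr (n + 1) y := by
          refine nonneg_of_deriv (hasDerivAt_Rr n) (Rr_zero n) ?_ y hy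
          intro x hx
          exact ((ih x hx).2 hn).2
        -- upper: Rr (n+1) y ≤ y^(n+1)/(n+1)!  via F = pow - Rr
        have hup : Rr (n + 1) y ≤ y ^ (n + 1) / ((n + 1).factorial : ℝ) := by
          have := nonneg_of_deriv
            (F := fun x => x ^ (n + 1) / ((n + 1).factorial : ℝ) - Rr (n + 1) x)
            (F' := fun x => x ^ n / (n.factorial : ℝ) - Rr n x)
            (fun x => (hasDerivAt_powfac n x).sub (hasDerivAt_Rr n x))
            (by simp [Rr_zero]) ?_ y hy
          · linarith
          · intro x hx
            have := ((ih x hx).2 hn).1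
            linarith
        exact ⟨hlow, hup⟩
      · -- n+1 odd, n even
        intro ho
        have hn : Even n := Nat.not_odd_iff_even.mp (Nat.odd_add_one.mp ho)
        have hup : Rr (n + 1) y ≤ 0 := by
          have := nonneg_of_deriv (F := fun x => -Rr (n + 1) x) (F' := fun x => -Rr n x)
            (fun x => (hasDerivAt_Rr n x).neg) (by simp [Rr_zero]) ?_ y hy
          · linarith
          · intro x hx
            have := ((ih x hx).1 hn).1
            linarith
        have hlow : y ^ (n + 1) / ((n + 1).factorial : ℝ) ≤ Rr (n + 1) y := by
          have := nonneg_of_deriv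
            (F := fun x => Rr (n + 1) x - x ^ (n + 1) / ((n + 1).factorial : ℝ))
            (F' := fun x => Rr n x - x ^ n / (n.factorial : ℝ))
            (fun x => (hasDerivAt_Rr n x).sub (hasDerivAt_powfac n x))
            (by simp [Rr_zero]) ?_ y hy
          · linarith
          · intro x hx
            have := ((ih x hx).1 hn).2
            linarith
        exact ⟨hlow, hup⟩

lemma Rr_eq_tsum (p : ℕ) (y : ℝ) :
    Rr p y = ∑' n : ℕ, y ^ (n + p) / ((n + p).factorial : ℝ) := by
  have h := Real.summable_pow_div_factorial y
  have h2 := Summable.sum_add_tsum_nat_add (f := fun n => y ^ n / (n.factorial : ℝ)) p h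
  rw [Rr, Real.exp_eq_exp_ℝ, NormedSpace.exp_eq_tsum_div]
  linarith

lemma Rr_nonneg_case {p : ℕ} {s b x : ℝ} (hs : 0 ≤ s) (hx : 0 ≤ x) (hxb : x ≤ b) (hb : 0 < b) :
    Rr p (s * x) ≤ x ^ p / b ^ p * Rr p (s * b) := by
  rw [Rr_eq_tsum, Rr_eq_tsum, ← tsum_mul_left]
  apply Summable.tsum_le_tsum
  · intro n
    have hbp : (0:ℝ) < b ^ p := pow_pos hb p
    have key : (s * x) ^ (n + p) ≤ x ^ p / b ^ p * (s * b) ^ (n + p) := by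
      have h1 : x ^ (n + p) ≤ b ^ n * x ^ p := by
        rw [pow_add]
        exact mul_le_mul_of_nonneg_right (pow_le_pow_left₀ hx hxb n) (pow_nonneg hx p)
      have h2 : (0:ℝ) ≤ s ^ (n + p) := pow_nonneg hs _
      calc (s * x) ^ (n + p) = s ^ (n + p) * x ^ (n + p) := mul_pow _ _ _
        _ ≤ s ^ (n + p) * (b ^ n * x ^ p) := mul_le_mul_of_nonneg_left h1 h2
        _ = x ^ p / b ^ p * (s ^ (n + p) * b ^ (n + p)) := by
            rw [pow_add b n p]
            field_simp
        _ = x ^ p / b ^ p * (s * b) ^ (n + p) := by rw [mul_pow]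
    have hfac : (0:ℝ) < ((n + p).factorial : ℝ) := by positivity
    rw [show x ^ p / b ^ p * ((s * b) ^ (n + p) / ((n + p).factorial : ℝ))
        = x ^ p / b ^ p * (s * b) ^ (n + p) / ((n + p).factorial : ℝ) by ring]
    exact div_le_div_of_nonneg_right key hfac.le
  · exact (summable_nat_add_iff p).2 (Real.summable_pow_div_factorial (s * x))
  · exact ((summable_nat_add_iff p).2 (Real.summable_pow_div_factorial (s * b))).mul_left _

lemma Rr_pos_lb {p : ℕ} {y : ℝ} (hy : 0 ≤ y) : y ^ p / (p.factorial : ℝ) ≤ Rr p y := by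
  have h := Real.sum_le_exp_of_nonneg hy (p + 1)
  rw [Finset.sum_range_succ] at h
  rw [Rr]
  linarith

lemma pointwise_bound (p : ℕ) (hp : 1 ≤ p) {s b x : ℝ} (hs : 0 ≤ s) (hb : 0 < b) (hxb : x ≤ b) :
    Real.exp (s * x) ≤ max (x ^ p) 0 / b ^ p * Rr p (s * b)
      + ∑ j ∈ Finset.range p, s ^ j * x ^ j / (j.factorial : ℝ) := by
  have hsum : ∑ j ∈ Finset.range p, (s * x) ^ j / (j.factorial : ℝ)
      = ∑ j ∈ Finset.range p, s ^ j * x ^ j / (j.factorial : ℝ) := by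
    refine Finset.sum_congr rfl fun j _ => by rw [mul_pow]
  have hexp : Real.exp (s * x) = Rr p (s * x) + ∑ j ∈ Finset.range p, s ^ j * x ^ j / (j.factorial : ℝ) := by
    rw [Rr, ← hsum]; ring
  rw [hexp]
  have key : Rr p (s * x) ≤ max (x ^ p) 0 / b ^ p * Rr p (s * b) := by
    rcases le_or_gt 0 x with hx | hx
    · rw [max_eq_left (pow_nonneg hx p)]
      exact Rr_nonneg_case hs hx hxb hb
    · have hsx : s * x ≤ 0 := mul_nonpos_of_nonneg_of_nonpos hs hx.le
      rcases Nat.even_or_odd p with he | ho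
      · -- even p
        have hxp : (0:ℝ) ≤ x ^ p := he.pow_nonneg x
        rw [max_eq_left hxp]
        have h1 : Rr p (s * x) ≤ (s * x) ^ p / (p.factorial : ℝ) := ((Rr_neg p _ hsx).1 he).2
        have h2 : (s * b) ^ p / (p.factorial : ℝ) ≤ Rr p (s * b) :=
          Rr_pos_lb (mul_nonneg hs hb.le)
        have hbp : (0:ℝ) < b ^ p := pow_pos hb p
        have heq : (s * x) ^ p / (p.factorial : ℝ)
            = x ^ p / b ^ p * ((s * b) ^ p / (p.factorial : ℝ)) := by
          rw [mul_pow, mul_pow]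
          have : (p.factorial : ℝ) ≠ 0 := Nat.cast_ne_zero.2 p.factorial_ne_zero
          field_simp
        calc Rr p (s * x) ≤ (s * x) ^ p / (p.factorial : ℝ) := h1
          _ = x ^ p / b ^ p * ((s * b) ^ p / (p.factorial : ℝ)) := heq
          _ ≤ x ^ p / b ^ p * Rr p (s * b) :=
              mul_le_mul_of_nonneg_left h2 (div_nonneg hxp hbp.le)
      · -- odd p
        have hxp : x ^ p < 0 := ho.pow_neg hx
        rw [max_eq_right hxp.le, zero_div, zero_mul]
        exact ((Rr_neg p _ hsx).2 ho).2
  linarith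

theorem statement1 {Ω : Type*} [MeasurableSpace Ω] (P : Measure Ω) [IsProbabilityMeasure P]
    (p : ℕ) (hp : 1 ≤ p) (b : ℝ) (hb : 0 < b)
    (X : Ω → ℝ) (hX : Measurable X)
    (hXb : P {ω | X ω ≤ b} = 1)
    (hint : Integrable (fun ω => |X ω| ^ p) P)
    (s : ℝ) (hs : 0 ≤ s) :
    ∫ ω, Real.exp (s * X ω) ∂P ≤
      (∫ ω, max ((X ω) ^ p) 0 ∂P) / b ^ p * T (p + 1) (s * b)
        + ∫ ω, ∑ j ∈ Finset.range p, s ^ j * (X ω) ^ j / (j.factorial : ℝ) ∂P := by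
  open MeasureTheory in
  have hT : T (p + 1) (s * b) = Rr p (s * b) := rfl
  set c := Rr p (s * b) with hc
  -- a.e. bound X ≤ b
  have hae : ∀ᵐ ω ∂P, X ω ≤ b := by
    rw [MeasureTheory.ae_iff]
    have hm : MeasurableSet {ω | X ω ≤ b} := hX measurableSet_Iic
    have := MeasureTheory.measure_compl hm (MeasureTheory.measure_ne_top P _)
    simp only [MeasureTheory.measure_univ, hXb, tsub_self] at this
    simpa [Set.compl_setOf] using this
  -- integrability of max
  have h1 : Integrable (fun ω => max ((X ω) ^ p) 0) P := by
    refine hint.mono ((hX.pow_const p).max measurable_const).aestronglyMeasurable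
      (Filter.Eventually.of_forall fun ω => ?_)
    have h0 : (0:ℝ) ≤ max ((X ω) ^ p) 0 := le_max_right _ _
    rw [Real.norm_eq_abs, Real.norm_eq_abs, abs_of_nonneg h0, abs_of_nonneg (by positivity)]
    exact max_le (le_trans (le_abs_self _) (by rw [abs_pow])) (by positivity)
  -- integrability of each monomial
  have hmono : ∀ j ∈ Finset.range p, Integrable (fun ω => s ^ j * (X ω) ^ j / (j.factorial : ℝ)) P := by
    intro j hj
    have hjp : j ≤ p := (Finset.mem_range.1 hj).le
    have hXj : Integrable (fun ω => (X ω) ^ j) P := by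
      refine ((integrable_const (1:ℝ)).add hint).mono
        (hX.pow_const j).aestronglyMeasurable (Filter.Eventually.of_forall fun ω => ?_)
      simp only [Pi.add_apply]
      rw [Real.norm_eq_abs, Real.norm_eq_abs, abs_pow]
      have h2 : (0:ℝ) ≤ 1 + |X ω| ^ p := by positivity
      rw [abs_of_nonneg h2]
      rcases le_or_gt (|X ω|) 1 with h | h
      · have : |X ω| ^ j ≤ 1 := pow_le_one₀ (abs_nonneg _) h
        nlinarith [pow_nonneg (abs_nonneg (X ω)) p]
      · have : |X ω| ^ j ≤ |X ω| ^ p := pow_le_pow_right₀ h.le hjp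
        linarith
    simpa [mul_div_assoc] using (hXj.div_const ((j.factorial : ℝ))).const_mul (s ^ j)
  have hpoly : Integrable (fun ω => ∑ j ∈ Finset.range p, s ^ j * (X ω) ^ j / (j.factorial : ℝ)) P :=
    integrable_finset_sum _ hmono
  have hg1 : Integrable (fun ω => max ((X ω) ^ p) 0 / b ^ p * c) P :=
    (h1.div_const (b ^ p)).mul_const c
  have hg : Integrable (fun ω => max ((X ω) ^ p) 0 / b ^ p * c
      + ∑ j ∈ Finset.range p, s ^ j * (X ω) ^ j / (j.factorial : ℝ)) P := hg1.add hpoly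
  have hptwise : ∀ᵐ ω ∂P, Real.exp (s * X ω) ≤ max ((X ω) ^ p) 0 / b ^ p * c
      + ∑ j ∈ Finset.range p, s ^ j * (X ω) ^ j / (j.factorial : ℝ) :=
    hae.mono fun ω h => pointwise_bound p hp hs hb h
  have hexp_int : Integrable (fun ω => Real.exp (s * X ω)) P := by
    refine hg.mono' ((measurable_const.mul hX).exp).aestronglyMeasurable ?_
    refine hptwise.mono fun ω h => ?_
    rw [Real.norm_eq_abs, abs_of_pos (Real.exp_pos _)]
    exact h
  calc ∫ ω, Real.exp (s * X ω) ∂P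
      ≤ ∫ ω, (max ((X ω) ^ p) 0 / b ^ p * c
        + ∑ j ∈ Finset.range p, s ^ j * (X ω) ^ j / (j.factorial : ℝ)) ∂P :=
        integral_mono_ae hexp_int hg hptwise
    _ = (∫ ω, max ((X ω) ^ p) 0 ∂P) / b ^ p * c
        + ∫ ω, ∑ j ∈ Finset.range p, s ^ j * (X ω) ^ j / (j.factorial : ℝ) ∂P := by
        rw [integral_add hg1 hpoly]
        congr 1
        rw [MeasureTheory.integral_mul_const, MeasureTheory.integral_div]
    _ = _ := by rw [hT]
end

section
/- Let b > 0, let p ≥ 2 be an even integer, let s > 0, and let X be a random variable with P(X ≤ b) = 1 and E|X|^p < ∞. Then m_{X,s}(p) ≥ m_{X,s}(p+1), where m_{X,s}(q) := (E[max(X^q, 0)] / b^q) · T_{q+1}(sb) + E[∑_{j=0}^{q−1} s^j X^j / j!]. -/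
open Real Finset MeasureTheory

/-- `m X s b q = (E[max(X^q,0)] / b^q) * T_{q+1}(s b) + E[∑_{j=0}^{q-1} s^j X^j / j!]`. -/
noncomputable def m {Ω : Type*} [MeasurableSpace Ω] (P : Measure Ω) (X : Ω → ℝ) (s b : ℝ)
    (q : ℕ) : ℝ :=
  (∫ ω, max ((X ω) ^ q) 0 ∂P) / b ^ q * T (q + 1) (s * b)
    + ∫ ω, ∑ j ∈ Finset.range q, s ^ j * (X ω) ^ j / (j.factorial : ℝ) ∂P

theorem statement2 {Ω : Type*} [MeasurableSpace Ω] (P : Measure Ω) [IsProbabilityMeasure P]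
    (b : ℝ) (hb : 0 < b) (p : ℕ) (hp : 2 ≤ p) (hpeven : Even p)
    (s : ℝ) (hs : 0 < s)
    (X : Ω → ℝ) (hX : Measurable X)
    (hXb : P {ω | X ω ≤ b} = 1)
    (hint : Integrable (fun ω => |X ω| ^ p) P) :
    m P X s b (p + 1) ≤ m P X s b p := by
  have hmeas : MeasurableSet {ω | X ω ≤ b} := measurableSet_le hX measurable_const
  have hae : ∀ᵐ ω ∂P, X ω ≤ b := by
    rw [ae_iff]
    have h1 : {ω | ¬ X ω ≤ b} = {ω | X ω ≤ b}ᶜ := by ext ω; simp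
    rw [h1, measure_compl hmeas (measure_ne_top _ _), hXb, measure_univ]
    simp
  have hintp : Integrable (fun ω => (X ω) ^ p) P := by
    simpa only [hpeven.pow_abs] using hint
  have hintj : ∀ j, j ≤ p → Integrable (fun ω => (X ω) ^ j) P := by
    intro j hj
    refine ((integrable_const (1 : ℝ)).add hintp).mono'
      (hX.pow_const j).aestronglyMeasurable ?_
    filter_upwards with ω
    simp only [Pi.add_apply, Real.norm_eq_abs, abs_pow]
    rcases le_total (|X ω|) 1 with h | h
    · have h1 : |X ω| ^ j ≤ 1 := pow_le_one₀ (abs_nonneg _) h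
      have h2 : (0 : ℝ) ≤ X ω ^ p := hpeven.pow_nonneg _
      linarith
    · have h1 : |X ω| ^ j ≤ |X ω| ^ p := pow_le_pow_right₀ h hj
      rw [hpeven.pow_abs] at h1
      linarith
  have hintterm : ∀ j, j ≤ p →
      Integrable (fun ω => s ^ j * (X ω) ^ j / (j.factorial : ℝ)) P := by
    intro j hj
    exact (((hintj j hj).const_mul (s ^ j)).div_const _)
  have hmaxp : (fun ω => max ((X ω) ^ p) 0) = fun ω => (X ω) ^ p :=
    funext fun ω => max_eq_left (hpeven.pow_nonneg _)
  -- bound for max(X^{p+1},0)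
  have hbound : ∀ᵐ ω ∂P, max ((X ω) ^ (p + 1)) 0 ≤ b * (X ω) ^ p := by
    filter_upwards [hae] with ω hω
    have hxp : (0 : ℝ) ≤ X ω ^ p := hpeven.pow_nonneg _
    rcases le_total 0 (X ω) with h | h
    · have : X ω ^ (p + 1) = X ω * X ω ^ p := by ring
      rw [max_eq_left (by positivity), this]
      exact mul_le_mul_of_nonneg_right hω hxp
    · have hodd : Odd (p + 1) := hpeven.add_one
      have : X ω ^ (p + 1) ≤ 0 := hodd.pow_nonpos h
      rw [max_eq_right this]
      positivity
  have hintmax1 : Integrable (fun ω => max ((X ω) ^ (p + 1)) 0) P := by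
    refine (hintp.const_mul b).mono'
      (((hX.pow_const (p + 1)).max measurable_const).aestronglyMeasurable) ?_
    filter_upwards [hbound] with ω hω
    rw [Real.norm_eq_abs, abs_of_nonneg (le_max_right _ _)]
    exact hω
  set A := ∫ ω, (X ω) ^ p ∂P with hA
  set B := ∫ ω, max ((X ω) ^ (p + 1)) 0 ∂P with hB
  have hA0 : 0 ≤ A := integral_nonneg fun ω => hpeven.pow_nonneg _
  have hBA : B ≤ b * A := by
    calc B ≤ ∫ ω, b * (X ω) ^ p ∂P :=
          integral_mono_ae hintmax1 (hintp.const_mul b) hbound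
      _ = b * A := integral_const_mul b _
  have hbp : (0 : ℝ) < b ^ p := pow_pos hb p
  have hbp1 : (0 : ℝ) < b ^ (p + 1) := pow_pos hb (p + 1)
  have ht : 0 ≤ T (p + 1 + 1) (s * b) := by
    have := Real.sum_le_exp_of_nonneg (x := s * b) (by positivity) (p + 1)
    simp only [T]
    simpa using sub_nonneg.mpr this
  -- T (p+1) = T (p+2) + (s*b)^p / p!
  have hT : T (p + 1) (s * b) = T (p + 1 + 1) (s * b) + (s * b) ^ p / (p.factorial : ℝ) := by
    simp only [T, Nat.add_sub_cancel]
    rw [Finset.sum_range_succ]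
    ring
  -- sum splitting inside the integral for q = p+1
  have hsum : (∫ ω, ∑ j ∈ Finset.range (p + 1), s ^ j * (X ω) ^ j / (j.factorial : ℝ) ∂P)
      = (∫ ω, ∑ j ∈ Finset.range p, s ^ j * (X ω) ^ j / (j.factorial : ℝ) ∂P)
        + (s ^ p / (p.factorial : ℝ)) * A := by
    have h1 : (fun ω => ∑ j ∈ Finset.range (p + 1), s ^ j * (X ω) ^ j / (j.factorial : ℝ))
        = fun ω => (∑ j ∈ Finset.range p, s ^ j * (X ω) ^ j / (j.factorial : ℝ))
          + (s ^ p / (p.factorial : ℝ)) * (X ω) ^ p := by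
      funext ω
      rw [Finset.sum_range_succ]
      ring
    rw [h1, integral_add (integrable_finset_sum _ fun j hj =>
      hintterm j (le_of_lt (Finset.mem_range.mp hj))) ((hintp.const_mul _)),
      integral_const_mul]
  have hkey : B / b ^ (p + 1) * T (p + 1 + 1) (s * b) ≤ A / b ^ p * T (p + 1 + 1) (s * b) := by
    refine mul_le_mul_of_nonneg_right ?_ ht
    rw [div_le_div_iff₀ hbp1 hbp]
    calc B * b ^ p ≤ (b * A) * b ^ p :=
          mul_le_mul_of_nonneg_right hBA (le_of_lt hbp)
      _ = A * b ^ (p + 1) := by ring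
  have heq : A / b ^ p * ((s * b) ^ p / (p.factorial : ℝ)) = s ^ p / (p.factorial : ℝ) * A := by
    rw [mul_pow]
    field_simp
  simp only [m, hmaxp, hsum, hT]
  rw [mul_add, heq]
  linarith
end

section
/- Let b > 0, let p ≥ 2 be an even integer, let s > 0, and let X be a random variable with P(0 ≤ X ≤ b) = 1. Then m_{X,s}(p+1) ≥ m_{X,s}(p+2), where m_{X,s}(q) := (E[max(X^q, 0)] / b^q) · T_{q+1}(sb) + E[∑_{j=0}^{q−1} s^j X^j / j!]. -/
open Real Finset MeasureTheory

theorem statement3 {Ω : Type*} [MeasurableSpace Ω] (P : Measure Ω) [IsProbabilityMeasure P]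
    (b : ℝ) (hb : 0 < b) (p : ℕ) (hp : 2 ≤ p) (hpeven : Even p)
    (s : ℝ) (hs : 0 < s)
    (X : Ω → ℝ) (hX : Measurable X)
    (hXb : P {ω | X ω ∈ Set.Icc 0 b} = 1) :
    m P X s b (p + 2) ≤ m P X s b (p + 1) := by
  have hmeas : MeasurableSet {ω | X ω ∈ Set.Icc (0:ℝ) b} := hX measurableSet_Icc
  have hae : ∀ᵐ ω ∂P, X ω ∈ Set.Icc (0:ℝ) b := by
    rw [Filter.eventually_iff, mem_ae_iff]
    have : {ω | X ω ∈ Set.Icc (0:ℝ) b}ᶜ = {ω | X ω ∈ Set.Icc (0:ℝ) b}ᶜ := rfl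
    rw [show {ω | X ω ∈ Set.Icc (0:ℝ) b} = {ω | X ω ∈ Set.Icc (0:ℝ) b} from rfl]
    rw [measure_compl hmeas (measure_ne_top P _), hXb, measure_univ, tsub_self]
  have hint : ∀ j : ℕ, Integrable (fun ω => X ω ^ j) P := by
    intro j
    refine (integrable_const (b ^ j)).mono' (hX.pow_const j).aestronglyMeasurable ?_
    filter_upwards [hae] with ω h
    rw [Real.norm_eq_abs, abs_pow, abs_of_nonneg h.1]
    exact pow_le_pow_left₀ h.1 h.2 j
  have imax : ∀ q : ℕ, (∫ ω, max ((X ω) ^ q) 0 ∂P) = ∫ ω, X ω ^ q ∂P := by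
    intro q
    refine integral_congr_ae ?_
    filter_upwards [hae] with ω h
    exact max_eq_left (pow_nonneg h.1 q)
  have isum : ∀ q : ℕ, (∫ ω, ∑ j ∈ Finset.range q, s ^ j * (X ω) ^ j / (j.factorial : ℝ) ∂P)
      = ∑ j ∈ Finset.range q, s ^ j * (∫ ω, X ω ^ j ∂P) / (j.factorial : ℝ) := by
    intro q
    rw [integral_finset_sum]
    · refine Finset.sum_congr rfl fun j _ => ?_
      rw [integral_div, integral_const_mul]
    · intro j _
      exact (((hint j).const_mul _).div_const _)
  have hT : T (p + 2) (s * b) = T (p + 3) (s * b) + (s * b) ^ (p + 1) / ((p + 1).factorial : ℝ) := by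
    simp only [T, show p + 2 - 1 = p + 1 from rfl, show p + 3 - 1 = p + 2 from rfl,
      Finset.sum_range_succ]
    ring
  have ht : 0 ≤ T (p + 3) (s * b) := by
    have := Real.sum_le_exp_of_nonneg (x := s * b) (by positivity) (p + 2)
    simp only [T, show p + 3 - 1 = p + 2 from rfl]
    linarith
  have hI : (∫ ω, X ω ^ (p + 2) ∂P) ≤ b * ∫ ω, X ω ^ (p + 1) ∂P := by
    rw [← integral_const_mul]
    refine integral_mono_ae (hint (p + 2)) ((hint (p + 1)).const_mul b) ?_
    filter_upwards [hae] with ω h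
    calc X ω ^ (p + 2) = X ω * X ω ^ (p + 1) := by ring
      _ ≤ b * X ω ^ (p + 1) := mul_le_mul_of_nonneg_right h.2 (pow_nonneg h.1 _)
  have hI1 : 0 ≤ ∫ ω, X ω ^ (p + 1) ∂P := by
    refine integral_nonneg_of_ae ?_
    filter_upwards [hae] with ω h
    exact pow_nonneg h.1 _
  rw [m, m, imax, imax, isum, isum, show p + 2 + 1 = p + 3 from rfl,
    show p + 1 + 1 = p + 2 from rfl, hT, Finset.sum_range_succ]
  set I1 := ∫ ω, X ω ^ (p + 1) ∂P
  set I2 := ∫ ω, X ω ^ (p + 2) ∂P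
  have key : I2 / b ^ (p + 2) ≤ I1 / b ^ (p + 1) := by
    rw [div_le_div_iff₀ (by positivity) (by positivity)]
    have hbp : (0:ℝ) < b ^ (p + 1) := by positivity
    calc I2 * b ^ (p + 1) ≤ (b * I1) * b ^ (p + 1) := by nlinarith
      _ = I1 * b ^ (p + 2) := by ring
  have hpow : I1 / b ^ (p + 1) * ((s * b) ^ (p + 1) / ((p + 1).factorial : ℝ))
      = s ^ (p + 1) * I1 / ((p + 1).factorial : ℝ) := by
    rw [mul_pow]
    field_simp
  have := mul_le_mul_of_nonneg_right key ht
  nlinarith [this, hpow]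
end

section
/- Let p be a positive integer, b > 0, and let X be a random variable with P(X ∈ [0, b]) = 1 and P(X > 0) > 0. Define z(s) := (E[X^p] / b^p) · T_{p+1}(sb) + E[∑_{j=0}^{p−1} s^j X^j / j!]. Then the derivative z' of z is positive on (0, ∞) and the function s ↦ log(z'(s)) is convex on (0, ∞). -/
open Real Finset MeasureTheory

namespace Aux4


noncomputable def g (α b : ℝ) (d : ℕ → ℝ) (n : ℕ) : ℝ → ℝ :=
  fun s => α * Real.exp (s * b) + ∑ j ∈ Finset.range n, d j * s ^ j / (j.factorial : ℝ)

noncomputable def v (α b : ℝ) (d : ℕ → ℝ) (j : ℕ) : ℝ := d j + α * b ^ j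

lemma exp_tsum (x : ℝ) : Real.exp x = ∑' n : ℕ, x ^ n / (n.factorial : ℝ) := by
  rw [Real.exp_eq_exp_ℝ, NormedSpace.exp_eq_tsum_div]

lemma hasDerivAt_g (α b : ℝ) (d : ℕ → ℝ) (n : ℕ) (s : ℝ) :
    HasDerivAt (g α b d n) (g (α * b) b (fun j => d (j + 1)) (n - 1) s) s := by
  have h1 : HasDerivAt (fun s : ℝ => α * Real.exp (s * b)) (α * b * Real.exp (s * b)) s := by
    have := ((hasDerivAt_mul_const (c := b) (x := s)).exp).const_mul α
    rw [show α * b * Real.exp (s * b) = α * (Real.exp (s * b) * b) by ring]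
    exact this
  have h2 : ∀ j ∈ Finset.range n, HasDerivAt (fun s : ℝ => d j * s ^ j / (j.factorial : ℝ))
      (d j * ((j : ℝ) * s ^ (j - 1)) / (j.factorial : ℝ)) s := fun j _ =>
    ((hasDerivAt_pow j s).const_mul (d j)).div_const _
  have h3 : HasDerivAt (fun s : ℝ => ∑ j ∈ Finset.range n, d j * s ^ j / (j.factorial : ℝ))
      (∑ j ∈ Finset.range n, d j * ((j : ℝ) * s ^ (j - 1)) / (j.factorial : ℝ)) s :=
    HasDerivAt.fun_sum h2
  have key : (∑ j ∈ Finset.range n, d j * ((j : ℝ) * s ^ (j - 1)) / (j.factorial : ℝ))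
      = ∑ j ∈ Finset.range (n - 1), d (j + 1) * s ^ j / (j.factorial : ℝ) := by
    cases n with
    | zero => simp
    | succ k =>
      rw [Finset.sum_range_succ']
      simp only [Nat.cast_zero, zero_mul, mul_zero, zero_div, add_zero, Nat.succ_sub_one]
      refine Finset.sum_congr rfl fun i _ => ?_
      have hfac : ((i + 1).factorial : ℝ) = ((i : ℝ) + 1) * (i.factorial : ℝ) := by
        rw [Nat.factorial_succ]; push_cast; ring
      have hi : (i : ℝ) + 1 ≠ 0 := by positivity
      have hif : (i.factorial : ℝ) ≠ 0 := by positivity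
      rw [hfac]
      push_cast
      field_simp
  have := h1.add h3
  rw [key] at this
  exact this

lemma g_continuous (α b : ℝ) (d : ℕ → ℝ) (n : ℕ) : Continuous (g α b d n) :=
  (hasDerivAt_g α b d n · |>.differentiableAt) |> Differentiable.continuous

lemma g_pos {α b : ℝ} {d : ℕ → ℝ} {n : ℕ} (hα : 0 < α) (hd : ∀ j, 0 ≤ d j) {s : ℝ}
    (hs : 0 ≤ s) : 0 < g α b d n s := by
  refine add_pos_of_pos_of_nonneg (mul_pos hα (Real.exp_pos _)) ?_
  exact Finset.sum_nonneg fun j _ =>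
    div_nonneg (mul_nonneg (hd j) (pow_nonneg hs j)) (Nat.cast_nonneg _)

lemma summable_v {α b : ℝ} (d : ℕ → ℝ) {n : ℕ} (hd0 : ∀ j, n ≤ j → d j = 0) (s : ℝ) :
    Summable (fun j => v α b d j * s ^ j / (j.factorial : ℝ)) := by
  have heq : (fun j => v α b d j * s ^ j / (j.factorial : ℝ))
      = fun j => d j * s ^ j / (j.factorial : ℝ) + α * ((s * b) ^ j / (j.factorial : ℝ)) := by
    funext j; simp only [v]; ring
  rw [heq]
  refine Summable.add ?_ ((Real.summable_pow_div_factorial (s * b)).mul_left α)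
  refine summable_of_ne_finset_zero (s := Finset.range n) fun j hj => ?_
  rw [hd0 j (by simpa using hj)]; simp

lemma g_eq_tsum {α b : ℝ} {d : ℕ → ℝ} {n : ℕ} (hd0 : ∀ j, n ≤ j → d j = 0) (s : ℝ) :
    g α b d n s = ∑' j : ℕ, v α b d j * s ^ j / (j.factorial : ℝ) := by
  have heq : (fun j => v α b d j * s ^ j / (j.factorial : ℝ))
      = fun j => d j * s ^ j / (j.factorial : ℝ) + α * ((s * b) ^ j / (j.factorial : ℝ)) := by
    funext j; simp only [v]; ring
  have h1 : Summable (fun j : ℕ => d j * s ^ j / (j.factorial : ℝ)) := by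
    refine summable_of_ne_finset_zero (s := Finset.range n) fun j hj => ?_
    rw [hd0 j (by simpa using hj)]; simp
  have h2 : Summable (fun j : ℕ => α * ((s * b) ^ j / (j.factorial : ℝ))) :=
    (Real.summable_pow_div_factorial (s * b)).mul_left α
  rw [heq, Summable.tsum_add h1 h2, tsum_mul_left, ← exp_tsum (s * b)]
  rw [tsum_eq_sum (s := Finset.range n) (fun j hj => by rw [hd0 j (by simpa using hj)]; simp)]
  rw [g]; ring



lemma tsum_CS {v : ℕ → ℝ} {s : ℝ} (hs : 0 ≤ s)
    (hv : ∀ j, 0 ≤ v j) (hlc : ∀ j, v (j + 1) ^ 2 ≤ v j * v (j + 2))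
    (h0 : Summable (fun j => v j * s ^ j / (j.factorial : ℝ)))
    (h1 : Summable (fun j => v (j + 1) * s ^ j / (j.factorial : ℝ)))
    (h2 : Summable (fun j => v (j + 2) * s ^ j / (j.factorial : ℝ))) :
    (∑' j : ℕ, v (j + 1) * s ^ j / (j.factorial : ℝ)) ^ 2
      ≤ (∑' j : ℕ, v j * s ^ j / (j.factorial : ℝ))
        * ∑' j : ℕ, v (j + 2) * s ^ j / (j.factorial : ℝ) := by
  set w : ℕ → ℝ := fun j => s ^ j / (j.factorial : ℝ) with hw
  have hwnn : ∀ j, 0 ≤ w j := fun j => div_nonneg (pow_nonneg hs j) (Nat.cast_nonneg _)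
  have hterm : ∀ (k : ℕ) (j : ℕ), 0 ≤ v (j + k) * s ^ j / (j.factorial : ℝ) := fun k j =>
    div_nonneg (mul_nonneg (hv _) (pow_nonneg hs j)) (Nat.cast_nonneg _)
  have hbound : ∀ N : ℕ, (∑ j ∈ Finset.range N, v (j + 1) * s ^ j / (j.factorial : ℝ)) ^ 2
      ≤ (∑' j : ℕ, v j * s ^ j / (j.factorial : ℝ))
        * ∑' j : ℕ, v (j + 2) * s ^ j / (j.factorial : ℝ) := by
    intro N
    have hCS := Finset.sum_sq_le_sum_mul_sum_of_sq_eq_mul (Finset.range N)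
      (r := fun j => Real.sqrt ((v j * s ^ j / (j.factorial : ℝ))
        * (v (j + 2) * s ^ j / (j.factorial : ℝ))))
      (f := fun j => v j * s ^ j / (j.factorial : ℝ))
      (g := fun j => v (j + 2) * s ^ j / (j.factorial : ℝ))
      (fun j _ => hterm 0 j) (fun j _ => hterm 2 j)
      (fun j _ => Real.sq_sqrt (mul_nonneg (hterm 0 j) (hterm 2 j)))
    have hmid : (∑ j ∈ Finset.range N, v (j + 1) * s ^ j / (j.factorial : ℝ))
        ≤ ∑ j ∈ Finset.range N, Real.sqrt ((v j * s ^ j / (j.factorial : ℝ))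
          * (v (j + 2) * s ^ j / (j.factorial : ℝ))) := by
      refine Finset.sum_le_sum fun j _ => ?_
      have hsq : (v (j + 1) * s ^ j / (j.factorial : ℝ)) ^ 2
          ≤ (v j * s ^ j / (j.factorial : ℝ)) * (v (j + 2) * s ^ j / (j.factorial : ℝ)) := by
        have := mul_le_mul_of_nonneg_right (hlc j) (sq_nonneg (s ^ j / (j.factorial : ℝ)))
        calc (v (j + 1) * s ^ j / (j.factorial : ℝ)) ^ 2
            = v (j + 1) ^ 2 * (s ^ j / (j.factorial : ℝ)) ^ 2 := by ring
          _ ≤ v j * v (j + 2) * (s ^ j / (j.factorial : ℝ)) ^ 2 := this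
          _ = (v j * s ^ j / (j.factorial : ℝ)) * (v (j + 2) * s ^ j / (j.factorial : ℝ)) := by
              ring
      calc v (j + 1) * s ^ j / (j.factorial : ℝ)
          = Real.sqrt ((v (j + 1) * s ^ j / (j.factorial : ℝ)) ^ 2) :=
            (Real.sqrt_sq (hterm 1 j)).symm
        _ ≤ _ := Real.sqrt_le_sqrt hsq
    calc (∑ j ∈ Finset.range N, v (j + 1) * s ^ j / (j.factorial : ℝ)) ^ 2
        ≤ (∑ j ∈ Finset.range N, Real.sqrt ((v j * s ^ j / (j.factorial : ℝ))
            * (v (j + 2) * s ^ j / (j.factorial : ℝ)))) ^ 2 := by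
          refine pow_le_pow_left₀ (Finset.sum_nonneg fun j _ => hterm 1 j) hmid 2
      _ ≤ (∑ j ∈ Finset.range N, v j * s ^ j / (j.factorial : ℝ))
            * ∑ j ∈ Finset.range N, v (j + 2) * s ^ j / (j.factorial : ℝ) := hCS
      _ ≤ _ := by
          refine mul_le_mul (h0.sum_le_tsum _ (fun j _ => hterm 0 j))
            (h2.sum_le_tsum _ (fun j _ => hterm 2 j))
            (Finset.sum_nonneg fun j _ => hterm 2 j) (tsum_nonneg (hterm 0))
  have htend : Filter.Tendsto
      (fun N => (∑ j ∈ Finset.range N, v (j + 1) * s ^ j / (j.factorial : ℝ)) ^ 2)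
      Filter.atTop (nhds ((∑' j : ℕ, v (j + 1) * s ^ j / (j.factorial : ℝ)) ^ 2)) :=
    (h1.hasSum.tendsto_sum_nat).pow 2
  exact le_of_tendsto' htend hbound



lemma integral_CS {Ω : Type*} [MeasurableSpace Ω] (P : Measure Ω) {f g : Ω → ℝ}
    (hf2 : Integrable (fun ω => f ω ^ 2) P) (hg2 : Integrable (fun ω => g ω ^ 2) P)
    (hfg : Integrable (fun ω => f ω * g ω) P) :
    (∫ ω, f ω * g ω ∂P) ^ 2 ≤ (∫ ω, f ω ^ 2 ∂P) * ∫ ω, g ω ^ 2 ∂P := by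
  set A := ∫ ω, f ω ^ 2 ∂P with hA
  set B := ∫ ω, f ω * g ω ∂P with hB
  set C := ∫ ω, g ω ^ 2 ∂P with hC
  have hAnn : 0 ≤ A := integral_nonneg fun ω => sq_nonneg _
  have hCnn : 0 ≤ C := integral_nonneg fun ω => sq_nonneg _
  rcases hAnn.eq_or_lt with hA0 | hA0
  · have hfz : (fun ω => f ω ^ 2) =ᵐ[P] 0 :=
      (integral_eq_zero_iff_of_nonneg_ae (Filter.Eventually.of_forall fun ω => sq_nonneg _)
        hf2).mp hA0.symm
    have hf0 : f =ᵐ[P] 0 := by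
      filter_upwards [hfz] with ω h
      simpa using pow_eq_zero_iff (n := 2) (by norm_num) |>.mp h
    have hBz : B = 0 := by
      rw [hB, integral_congr_ae (g := fun _ => (0 : ℝ))
        (by filter_upwards [hf0] with ω h; simp [h]), integral_zero]
    rw [hBz, ← hA0]
    simp
  · have h0 : 0 ≤ ∫ ω, (B / A * f ω - g ω) ^ 2 ∂P := integral_nonneg fun ω => sq_nonneg _
    set t := B / A with ht
    have hexp : (fun ω => (t * f ω - g ω) ^ 2)
        = fun ω => t ^ 2 * f ω ^ 2 - 2 * t * (f ω * g ω) + g ω ^ 2 := by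
      funext ω; ring
    have hint : ∫ ω, (t * f ω - g ω) ^ 2 ∂P = t ^ 2 * A - 2 * t * B + C := by
      rw [hexp]
      have hF1 : Integrable (fun ω => t ^ 2 * f ω ^ 2 - 2 * t * (f ω * g ω)) P :=
        (hf2.const_mul (t ^ 2)).sub (hfg.const_mul (2 * t))
      rw [integral_add hF1 hg2,
        integral_sub (hf2.const_mul (t ^ 2)) (hfg.const_mul (2 * t)),
        integral_const_mul, integral_const_mul]
    rw [hint] at h0
    have hAne : A ≠ 0 := hA0.ne'
    rw [ht] at h0
    have : 0 ≤ C - B ^ 2 / A := by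
      have heq : (B / A) ^ 2 * A - 2 * (B / A) * B + C = C - B ^ 2 / A := by
        field_simp
        ring
      linarith [heq ▸ h0]
    have := (div_le_iff₀ hA0).mp (by linarith : B ^ 2 / A ≤ C)
    linarith [this]

lemma v_succ (α b : ℝ) (d : ℕ → ℝ) (j : ℕ) :
    v (α * b) b (fun i => d (i + 1)) j = v α b d (j + 1) := by
  simp only [v, pow_succ]; ring

lemma key {α b : ℝ} {d : ℕ → ℝ} {n : ℕ}
    (hd0 : ∀ j, n ≤ j → d j = 0)
    (hv : ∀ j, 0 ≤ v α b d j)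
    (hlc : ∀ j, v α b d (j + 1) ^ 2 ≤ v α b d j * v α b d (j + 2))
    {s : ℝ} (hs : 0 ≤ s) :
    g (α * b) b (fun j => d (j + 1)) (n - 1) s ^ 2
      ≤ g α b d n s * g (α * b * b) b (fun j => d (j + 1 + 1)) (n - 1 - 1) s := by
  have hd1 : ∀ j, n - 1 ≤ j → d (j + 1) = 0 := fun j hj => hd0 _ (by omega)
  have hd2 : ∀ j, n - 1 - 1 ≤ j → d (j + 1 + 1) = 0 := fun j hj => hd0 _ (by omega)
  have e1 : (fun j => v (α * b) b (fun i => d (i + 1)) j * s ^ j / (j.factorial : ℝ))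
      = fun j => v α b d (j + 1) * s ^ j / (j.factorial : ℝ) := by
    funext j; rw [v_succ]
  have e2 : (fun j => v (α * b * b) b (fun i => d (i + 1 + 1)) j * s ^ j / (j.factorial : ℝ))
      = fun j => v α b d (j + 1 + 1) * s ^ j / (j.factorial : ℝ)  := by
    funext j
    rw [show v (α * b * b) b (fun i => d (i + 1 + 1)) j
        = v (α * b) b (fun i => d (i + 1)) (j + 1) from v_succ (α * b) b (fun i => d (i + 1)) j,
      v_succ]
  rw [g_eq_tsum hd0 s, g_eq_tsum hd1 s, g_eq_tsum hd2 s]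
  rw [show (∑' j : ℕ, v (α * b) b (fun i => d (i + 1)) j * s ^ j / (j.factorial : ℝ))
      = ∑' j : ℕ, v α b d (j + 1) * s ^ j / (j.factorial : ℝ) from by rw [e1],
    show (∑' j : ℕ, v (α * b * b) b (fun i => d (i + 1 + 1)) j * s ^ j / (j.factorial : ℝ))
      = ∑' j : ℕ, v α b d (j + 1 + 1) * s ^ j / (j.factorial : ℝ) from by rw [e2]]
  exact tsum_CS hs hv hlc (summable_v d hd0 s)
    (e1 ▸ summable_v (α := α * b) (fun i => d (i + 1)) hd1 s)
    (e2 ▸ summable_v (α := α * b * b) (fun i => d (i + 1 + 1)) hd2 s)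

lemma analytic {α b : ℝ} {d : ℕ → ℝ} {n : ℕ} (hα : 0 < α) (hb : 0 < b)
    (hd : ∀ j, 0 ≤ d j) (hd0 : ∀ j, n ≤ j → d j = 0)
    (hlc : ∀ j, v α b d (j + 1) ^ 2 ≤ v α b d j * v α b d (j + 2)) :
    (∀ s ∈ Set.Ioi (0 : ℝ), 0 < deriv (g α b d n) s) ∧
      ConvexOn ℝ (Set.Ioi (0 : ℝ)) (fun s => Real.log (deriv (g α b d n) s)) := by
  have hαb : 0 < α * b := mul_pos hα hb
  have hd1 : ∀ j, 0 ≤ d (j + 1) := fun j => hd _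
  have hderiv0 : ∀ s : ℝ, deriv (g α b d n) s = g (α * b) b (fun j => d (j + 1)) (n - 1) s :=
    fun s => (hasDerivAt_g α b d n s).deriv
  have hpos1 : ∀ s : ℝ, 0 ≤ s → 0 < g (α * b) b (fun j => d (j + 1)) (n - 1) s :=
    fun s hs => g_pos hαb hd1 hs
  constructor
  · intro s hs
    rw [hderiv0 s]
    exact hpos1 s (le_of_lt hs)
  · have hfun : (fun s => Real.log (deriv (g α b d n) s))
        = fun s => Real.log (g (α * b) b (fun j => d (j + 1)) (n - 1) s) := by
      funext s; rw [hderiv0 s]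
    rw [hfun]
    set g1 := g (α * b) b (fun j => d (j + 1)) (n - 1) with hg1
    set g2 := g (α * b * b) b (fun j => d (j + 1 + 1)) (n - 1 - 1) with hg2
    set g3 := g (α * b * b * b) b (fun j => d (j + 1 + 1 + 1)) (n - 1 - 1 - 1) with hg3
    have hD1 : ∀ x : ℝ, HasDerivAt g1 (g2 x) x := fun x => hasDerivAt_g _ _ _ _ x
    have hD2 : ∀ x : ℝ, HasDerivAt g2 (g3 x) x := fun x => hasDerivAt_g _ _ _ _ x
    have hlog : ∀ x ∈ Set.Ioi (0 : ℝ),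
        deriv (fun s => Real.log (g1 s)) x = g2 x / g1 x := fun x hx =>
      ((hD1 x).log (hpos1 x (le_of_lt hx)).ne').deriv
    refine convexOn_of_deriv2_nonneg (convex_Ioi 0) ?_ ?_ ?_ ?_
    · exact ContinuousOn.log (g_continuous _ _ _ _).continuousOn
        fun x hx => (hpos1 x (le_of_lt hx)).ne'
    · rw [interior_Ioi]
      intro x hx
      exact ((hD1 x).log (hpos1 x (le_of_lt hx)).ne').differentiableAt.differentiableWithinAt
    · rw [interior_Ioi]
      intro x hx
      have hev : deriv (fun s => Real.log (g1 s)) =ᶠ[nhds x] fun y => g2 y / g1 y :=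
        Filter.eventually_of_mem (Ioi_mem_nhds hx) hlog
      have hdiff : DifferentiableAt ℝ (fun y => g2 y / g1 y) x :=
        (hD2 x).differentiableAt.div (hD1 x).differentiableAt (hpos1 x (le_of_lt hx)).ne'
      exact ((hev.differentiableAt_iff).mpr hdiff).differentiableWithinAt
    · rw [interior_Ioi]
      intro x hx
      have hev : deriv (fun s => Real.log (g1 s)) =ᶠ[nhds x] fun y => g2 y / g1 y :=
        Filter.eventually_of_mem (Ioi_mem_nhds hx) hlog
      have hdiv : HasDerivAt (fun y => g2 y / g1 y)
          ((g3 x * g1 x - g2 x * g2 x) / g1 x ^ 2) x :=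
        (hD2 x).div (hD1 x) (hpos1 x (le_of_lt hx)).ne'
      have h2 : deriv^[2] (fun s => Real.log (g1 s)) x
          = deriv (deriv (fun s => Real.log (g1 s))) x := rfl
      rw [h2, hev.deriv_eq, hdiv.deriv]
      refine div_nonneg ?_ (sq_nonneg _)
      rw [sub_nonneg]
      have hkey := key (α := α * b) (b := b) (d := fun j => d (j + 1)) (n := n - 1)
        (fun j hj => hd0 _ (by omega))
        (fun j => by rw [v_succ]; exact add_nonneg (hd _) (by positivity))
        (fun j => by rw [v_succ, v_succ, v_succ]; exact hlc (j + 1))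
        (le_of_lt hx)
      calc g2 x * g2 x = g2 x ^ 2 := by ring
        _ ≤ g1 x * g3 x := hkey
        _ = g3 x * g1 x := by ring


end Aux4

theorem statement4 {Ω : Type*} [MeasurableSpace Ω] (P : Measure Ω) [IsProbabilityMeasure P]
    (p : ℕ) (hp : 1 ≤ p) (b : ℝ) (hb : 0 < b)
    (X : Ω → ℝ) (hX : Measurable X)
    (hXb : P {ω | X ω ∈ Set.Icc 0 b} = 1)
    (hXpos : 0 < P {ω | 0 < X ω})
    (z : ℝ → ℝ)
    (hz : z = fun s =>
      (∫ ω, (X ω) ^ p ∂P) / b ^ p * T (p + 1) (s * b)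
        + ∫ ω, ∑ j ∈ Finset.range p, s ^ j * (X ω) ^ j / (j.factorial : ℝ) ∂P) :
    (∀ s ∈ Set.Ioi (0 : ℝ), 0 < deriv z s) ∧
      ConvexOn ℝ (Set.Ioi (0 : ℝ)) (fun s => Real.log (deriv z s)) := by
  -- the truncated variable
  set Y : Ω → ℝ := fun ω => max (X ω) 0 with hYdef
  have hYm : Measurable Y := hX.max measurable_const
  have hYnn : ∀ ω, 0 ≤ Y ω := fun ω => le_max_right _ _
  have haeX : ∀ᵐ ω ∂P, X ω ∈ Set.Icc 0 b := by
    have hms : MeasurableSet {ω | X ω ∈ Set.Icc 0 b} := hX measurableSet_Icc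
    rw [ae_iff]
    have hc : {ω | ¬ X ω ∈ Set.Icc 0 b} = {ω | X ω ∈ Set.Icc 0 b}ᶜ := rfl
    rw [hc, prob_compl_eq_zero_iff hms]
    exact hXb
  have haeXY : X =ᵐ[P] Y := by
    filter_upwards [haeX] with ω h
    exact (max_eq_left h.1).symm
  have haeYb : ∀ᵐ ω ∂P, Y ω ≤ b := by
    filter_upwards [haeX] with ω h
    exact max_le h.2 hb.le
  have hYint : ∀ j : ℕ, Integrable (fun ω => Y ω ^ j) P := by
    intro j
    refine (integrable_const (b ^ j)).mono' ((hYm.pow_const j).aestronglyMeasurable) ?_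
    filter_upwards [haeYb] with ω hωb
    rw [Real.norm_of_nonneg (pow_nonneg (hYnn ω) j)]
    exact pow_le_pow_left₀ (hYnn ω) hωb j
  set m : ℕ → ℝ := fun j => ∫ ω, Y ω ^ j ∂P with hmdef
  have hmX : ∀ j, ∫ ω, X ω ^ j ∂P = m j := fun j =>
    integral_congr_ae (haeXY.mono fun ω h => by simp only []; rw [h])
  have hXint : ∀ j, Integrable (fun ω => X ω ^ j) P := fun j =>
    (hYint j).congr (haeXY.symm.mono fun ω h => by simp only []; rw [h])
  have hmnn : ∀ j, 0 ≤ m j := fun j => integral_nonneg fun ω => pow_nonneg (hYnn ω) j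
  have hstep : ∀ j, m (j + 1) ≤ b * m j := by
    intro j
    have hmono : ∀ᵐ ω ∂P, Y ω ^ (j + 1) ≤ b * Y ω ^ j := by
      filter_upwards [haeYb] with ω hωb
      calc Y ω ^ (j + 1) = Y ω * Y ω ^ j := by ring
        _ ≤ b * Y ω ^ j := mul_le_mul_of_nonneg_right hωb (pow_nonneg (hYnn ω) j)
    calc m (j + 1) ≤ ∫ ω, b * Y ω ^ j ∂P :=
          integral_mono_ae (hYint (j + 1)) ((hYint j).const_mul b) hmono
      _ = b * m j := integral_const_mul b _
  have hiter : ∀ i j, m (j + i) ≤ b ^ i * m j := by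
    intro i
    induction i with
    | zero => intro j; simp
    | succ k ih =>
      intro j
      calc m (j + (k + 1)) = m ((j + k) + 1) := by rw [Nat.add_succ]
        _ ≤ b * m (j + k) := hstep _
        _ ≤ b * (b ^ k * m j) := mul_le_mul_of_nonneg_left (ih j) hb.le
        _ = b ^ (k + 1) * m j := by ring
  have hmp_pos : 0 < m p := by
    refine (integral_pos_iff_support_of_nonneg
      (fun ω => pow_nonneg (hYnn ω) p) (hYint p)).mpr ?_
    refine lt_of_lt_of_le hXpos (measure_mono ?_)
    intro ω hω
    have h0 : 0 < Y ω := lt_of_lt_of_le hω (le_max_left _ _)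
    exact (pow_pos h0 p).ne'
  have hCS : ∀ k, m (k + 1) ^ 2 ≤ m k * m (k + 2) := by
    intro k
    have hfq : (fun ω => (Real.sqrt (Y ω ^ k)) ^ 2) = fun ω => Y ω ^ k := by
      funext ω; rw [Real.sq_sqrt (pow_nonneg (hYnn ω) k)]
    have hgq : (fun ω => (Real.sqrt (Y ω ^ (k + 2))) ^ 2) = fun ω => Y ω ^ (k + 2) := by
      funext ω; rw [Real.sq_sqrt (pow_nonneg (hYnn ω) (k + 2))]
    have hfg : (fun ω => Real.sqrt (Y ω ^ k) * Real.sqrt (Y ω ^ (k + 2)))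
        = fun ω => Y ω ^ (k + 1) := by
      funext ω
      rw [← Real.sqrt_mul (pow_nonneg (hYnn ω) k)]
      rw [show Y ω ^ k * Y ω ^ (k + 2) = (Y ω ^ (k + 1)) ^ 2 by ring]
      exact Real.sqrt_sq (pow_nonneg (hYnn ω) (k + 1))
    have := Aux4.integral_CS P (f := fun ω => Real.sqrt (Y ω ^ k))
      (g := fun ω => Real.sqrt (Y ω ^ (k + 2)))
      (by rw [hfq]; exact hYint k) (by rw [hgq]; exact hYint (k + 2))
      (by rw [hfg]; exact hYint (k + 1))
    rw [hfg, hfq, hgq] at this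
    exact this
  -- parameters
  set c : ℝ := m p / b ^ p with hcdef
  have hbppos : (0 : ℝ) < b ^ p := pow_pos hb p
  have hcpos : 0 < c := div_pos hmp_pos hbppos
  set d0 : ℕ → ℝ := fun j => if j < p then m j - c * b ^ j else 0 with hd0def
  have hd0supp : ∀ j, p ≤ j → d0 j = 0 := fun j hj => if_neg (by omega)
  have hcb : ∀ j, j ≤ p → c * b ^ j ≤ m j := by
    intro j hj
    have h1 : m p ≤ b ^ (p - j) * m j := by
      have := hiter (p - j) j
      rwa [Nat.add_sub_cancel' hj] at this
    have hsplit : (b : ℝ) ^ p = b ^ (p - j) * b ^ j := by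
      rw [← pow_add]; congr 1; omega
    rw [hcdef, div_mul_eq_mul_div, div_le_iff₀ hbppos, hsplit]
    nlinarith [pow_pos hb j, pow_pos hb (p - j), hmnn j]
  have hd0nn : ∀ j, 0 ≤ d0 j := by
    intro j
    rw [hd0def]
    dsimp only
    split
    · have := hcb j (le_of_lt (by assumption)); linarith
    · exact le_refl 0
  have hveq : ∀ j, j ≤ p → Aux4.v c b d0 j = m j := by
    intro j hj
    rcases lt_or_eq_of_le hj with h | h
    · show d0 j + c * b ^ j = m j
      rw [hd0def]; dsimp only; rw [if_pos h]; ring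
    · subst h
      show d0 j + c * b ^ j = m j
      rw [hd0supp j le_rfl, zero_add, hcdef, div_mul_cancel₀ _ hbppos.ne']
  have hvge : ∀ j, p ≤ j → Aux4.v c b d0 j = c * b ^ j := by
    intro j hj
    show d0 j + c * b ^ j = c * b ^ j
    rw [hd0supp j hj, zero_add]
  have hlc : ∀ j, Aux4.v c b d0 (j + 1) ^ 2 ≤ Aux4.v c b d0 j * Aux4.v c b d0 (j + 2) := by
    intro j
    rcases le_or_gt (j + 2) p with h | h
    · rw [hveq (j + 1) (by omega), hveq j (by omega), hveq (j + 2) h]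
      exact hCS j
    · rcases le_or_gt p j with h2 | h2
      · rw [hvge (j + 1) (by omega), hvge j h2, hvge (j + 2) (by omega)]
        have : c * b ^ (j + 2) * (c * b ^ j) = (c * b ^ (j + 1)) ^ 2 := by ring
        nlinarith [this]
      · have hpj : p = j + 1 := by omega
        rw [hveq (j + 1) (by omega), hveq j (by omega), hvge (j + 2) (by omega)]
        have hc2 : c * b ^ (j + 2) = m (j + 1) * b := by
          rw [hcdef, hpj]
          field_simp
          ring
        rw [hc2]
        nlinarith [hstep j, hmnn (j + 1), hmnn j, hb]
  -- z = g c b d0 p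
  have hzg : z = Aux4.g c b d0 p := by
    rw [hz]
    funext s
    have hT : T (p + 1) (s * b) = Real.exp (s * b)
        - ∑ j ∈ Finset.range p, (s * b) ^ j / (j.factorial : ℝ) := by
      rw [T]; norm_num
    have hint : ∀ j ∈ Finset.range p,
        Integrable (fun ω => s ^ j * X ω ^ j / (j.factorial : ℝ)) P := by
      intro j _
      have he : (fun ω => s ^ j * X ω ^ j / (j.factorial : ℝ))
          = fun ω => (s ^ j / (j.factorial : ℝ)) * X ω ^ j := by
        funext ω; ring
      rw [he]
      exact (hXint j).const_mul _
    have hsum : ∫ ω, ∑ j ∈ Finset.range p, s ^ j * X ω ^ j / (j.factorial : ℝ) ∂P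
        = ∑ j ∈ Finset.range p, s ^ j * m j / (j.factorial : ℝ) := by
      rw [integral_finset_sum _ hint]
      refine Finset.sum_congr rfl fun j _ => ?_
      have he : (fun ω => s ^ j * X ω ^ j / (j.factorial : ℝ))
          = fun ω => (s ^ j / (j.factorial : ℝ)) * X ω ^ j := by
        funext ω; ring
      rw [he, integral_const_mul, hmX j]
      ring
    rw [hmX p, hT, hsum]
    show m p / b ^ p * _ + _ = c * Real.exp (s * b)
      + ∑ j ∈ Finset.range p, d0 j * s ^ j / (j.factorial : ℝ)
    have e1 : ∑ j ∈ Finset.range p, d0 j * s ^ j / (j.factorial : ℝ)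
        = ∑ j ∈ Finset.range p,
          (m j * s ^ j / (j.factorial : ℝ) - c * ((s * b) ^ j / (j.factorial : ℝ))) := by
      refine Finset.sum_congr rfl fun j hj => ?_
      rw [hd0def]
      dsimp only
      rw [if_pos (Finset.mem_range.mp hj), mul_pow]
      ring
    rw [e1, Finset.sum_sub_distrib, ← Finset.mul_sum, ← hcdef]
    have e2 : ∑ j ∈ Finset.range p, s ^ j * m j / (j.factorial : ℝ)
        = ∑ j ∈ Finset.range p, m j * s ^ j / (j.factorial : ℝ) :=
      Finset.sum_congr rfl fun j _ => by ring
    rw [e2]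
    ring
  rw [hzg]
  exact Aux4.analytic hcpos hb hd0nn hd0supp hlc
end

section
/- Let p ≥ 1 be an integer, b > 0, and let X be a random variable with P(X ∈ [0, b]) = 1 and P(X > 0) > 0. Set μ^k := E[X^k] for k = 1, …, p. Then for every y ≥ 0 one has 0 < C_p(y, b, μ^1, …, μ^p) ≤ 1, and for p = 1 one has C_1(y, b, μ^1) = 1. -/
open Real Finset MeasureTheory

/-- `Cp p y b μ`, where `μ k` stands for the `k`-th moment `μ^k`. -/
noncomputable def Cp (p : ℕ) (y b : ℝ) (μ : ℕ → ℝ) : ℝ :=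
  ((μ p * Real.exp y
      + ∑ j ∈ Finset.range (p - 2), y ^ j / (j.factorial : ℝ) * (b ^ (p - j - 2) * μ (j + 2) - μ p)) /
   (μ p * Real.exp y
      + ∑ j ∈ Finset.range (p - 1), y ^ j / (j.factorial : ℝ) * (b ^ (p - j - 1) * μ (j + 1) - μ p))) ^ 2

theorem statement6 {Ω : Type*} [MeasurableSpace Ω] (P : Measure Ω) [IsProbabilityMeasure P]
    (p : ℕ) (hp : 1 ≤ p) (b : ℝ) (hb : 0 < b)
    (X : Ω → ℝ) (hX : Measurable X)
    (hXb : P {ω | X ω ∈ Set.Icc 0 b} = 1)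
    (hXpos : 0 < P {ω | 0 < X ω})
    (y : ℝ) (hy : 0 ≤ y) :
    0 < Cp p y b (fun k => ∫ ω, (X ω) ^ k ∂P) ∧
      Cp p y b (fun k => ∫ ω, (X ω) ^ k ∂P) ≤ 1 ∧
      Cp 1 y b (fun k => ∫ ω, (X ω) ^ k ∂P) = 1 := by
  set μ : ℕ → ℝ := fun k => ∫ ω, (X ω) ^ k ∂P with hμ
  -- a.e. membership
  have hm : MeasurableSet {ω | X ω ∈ Set.Icc 0 b} := hX measurableSet_Icc
  have hae : ∀ᵐ ω ∂P, X ω ∈ Set.Icc 0 b := by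
    rw [ae_iff]
    have : {ω | ¬ X ω ∈ Set.Icc 0 b} = {ω | X ω ∈ Set.Icc 0 b}ᶜ := rfl
    rw [this, measure_compl hm (measure_ne_top P _), hXb, measure_univ, tsub_self]
  -- integrability
  have hInt : ∀ k : ℕ, Integrable (fun ω => X ω ^ k) P := by
    intro k
    apply Integrable.mono' (integrable_const (b ^ k))
      ((hX.pow_const k).aestronglyMeasurable)
    filter_upwards [hae] with ω hω
    rw [Real.norm_eq_abs, abs_of_nonneg (pow_nonneg hω.1 k)]
    exact pow_le_pow_left₀ hω.1 hω.2 k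
  -- monotone moment bound
  have hmono : ∀ k m : ℕ, k ≤ m → μ m ≤ b ^ (m - k) * μ k := by
    intro k m hkm
    rw [hμ]
    simp only
    rw [← integral_const_mul]
    refine integral_mono_ae (hInt m) ((hInt k).const_mul _) ?_
    filter_upwards [hae] with ω hω
    calc X ω ^ m = X ω ^ (m - k) * X ω ^ k := by
          rw [← pow_add]; congr 1; omega
      _ ≤ b ^ (m - k) * X ω ^ k :=
          mul_le_mul_of_nonneg_right (pow_le_pow_left₀ hω.1 hω.2 _) (pow_nonneg hω.1 k)
  -- positivity of moments
  have hpos : ∀ k : ℕ, 0 < μ k := by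
    intro k
    rw [hμ]
    simp only
    rw [integral_pos_iff_support_of_nonneg_ae ?_ (hInt k)]
    · refine lt_of_lt_of_le hXpos (measure_mono ?_)
      intro ω hω
      exact pow_ne_zero k (ne_of_gt hω)
    · filter_upwards [hae] with ω hω
      exact pow_nonneg hω.1 k
  -- general claim for any q ≥ 1
  have key : ∀ q : ℕ, 1 ≤ q → 0 < Cp q y b μ ∧ Cp q y b μ ≤ 1 := by
    intro q hq
    set N : ℝ := μ q * Real.exp y
      + ∑ j ∈ Finset.range (q - 2), y ^ j / (j.factorial : ℝ) * (b ^ (q - j - 2) * μ (j + 2) - μ q)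
      with hN
    set D : ℝ := μ q * Real.exp y
      + ∑ j ∈ Finset.range (q - 1), y ^ j / (j.factorial : ℝ) * (b ^ (q - j - 1) * μ (j + 1) - μ q)
      with hD
    have hcoef : ∀ j : ℕ, (0:ℝ) ≤ y ^ j / (j.factorial : ℝ) :=
      fun j => div_nonneg (pow_nonneg hy j) (Nat.cast_nonneg _)
    have hdenterm : ∀ j ∈ Finset.range (q - 1),
        (0:ℝ) ≤ y ^ j / (j.factorial : ℝ) * (b ^ (q - j - 1) * μ (j + 1) - μ q) := by
      intro j hj
      rw [Finset.mem_range] at hj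
      have h := hmono (j + 1) q (by omega)
      have : q - (j + 1) = q - j - 1 := by omega
      rw [this] at h
      exact mul_nonneg (hcoef j) (by linarith)
    have hNpos : 0 < N := by
      rw [hN]
      have h1 : 0 < μ q * Real.exp y := mul_pos (hpos q) (Real.exp_pos y)
      have h2 : (0:ℝ) ≤ ∑ j ∈ Finset.range (q - 2),
          y ^ j / (j.factorial : ℝ) * (b ^ (q - j - 2) * μ (j + 2) - μ q) := by
        refine Finset.sum_nonneg fun j hj => ?_
        rw [Finset.mem_range] at hj
        have h := hmono (j + 2) q (by omega)
        have : q - (j + 2) = q - j - 2 := by omega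
        rw [this] at h
        exact mul_nonneg (hcoef j) (by linarith)
      linarith
    have hND : N ≤ D := by
      rw [hN, hD]
      have h1 : ∑ j ∈ Finset.range (q - 2),
            y ^ j / (j.factorial : ℝ) * (b ^ (q - j - 2) * μ (j + 2) - μ q)
          ≤ ∑ j ∈ Finset.range (q - 2),
            y ^ j / (j.factorial : ℝ) * (b ^ (q - j - 1) * μ (j + 1) - μ q) := by
        refine Finset.sum_le_sum fun j hj => ?_
        rw [Finset.mem_range] at hj
        have hmm := hmono (j + 1) (j + 2) (by omega)
        have hsub : (j + 2) - (j + 1) = 1 := by omega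
        rw [hsub, pow_one] at hmm
        have hbp : (0:ℝ) ≤ b ^ (q - j - 2) := pow_nonneg hb.le _
        have hstep : b ^ (q - j - 2) * μ (j + 2) ≤ b ^ (q - j - 1) * μ (j + 1) := by
          have : b ^ (q - j - 1) = b ^ (q - j - 2) * b := by
            rw [← pow_succ]; congr 1; omega
          rw [this, mul_assoc]
          exact mul_le_mul_of_nonneg_left hmm hbp
        exact mul_le_mul_of_nonneg_left (by linarith) (hcoef j)
      have h2 : ∑ j ∈ Finset.range (q - 2),
            y ^ j / (j.factorial : ℝ) * (b ^ (q - j - 1) * μ (j + 1) - μ q)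
          ≤ ∑ j ∈ Finset.range (q - 1),
            y ^ j / (j.factorial : ℝ) * (b ^ (q - j - 1) * μ (j + 1) - μ q) := by
        refine Finset.sum_le_sum_of_subset_of_nonneg
          (Finset.range_subset_range.mpr (by omega)) ?_
        intro j hj _
        exact hdenterm j hj
      linarith
    have hDpos : 0 < D := lt_of_lt_of_le hNpos hND
    have hdiv : 0 < N / D := div_pos hNpos hDpos
    have hdiv1 : N / D ≤ 1 := (div_le_one hDpos).mpr hND
    constructor
    · exact pow_pos hdiv 2
    · exact pow_le_one₀ hdiv.le hdiv1
  refine ⟨(key p hp).1, (key p hp).2, ?_⟩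
  -- Cp 1 = 1
  have h1 : 0 < μ 1 * Real.exp y := mul_pos (hpos 1) (Real.exp_pos y)
  simp [Cp, div_self (ne_of_gt h1)]
end

section
/- Let b > 0 and let X be a random variable with P(X ∈ [0, b]) = 1 and P(X > 0) > 0. Set μ^k := E[X^k] for every positive integer k. Then for every x ≥ 0: lim_{p → ∞} C_p(x, b, μ^1, …, μ^p) = b^{−2} · ( E[X^2 exp(xX/b)] / E[X exp(xX/b)] )^2. -/
open Real Finset MeasureTheory Filter

theorem statement10 {Ω : Type*} [MeasurableSpace Ω] (P : Measure Ω) [IsProbabilityMeasure P]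
    (b : ℝ) (hb : 0 < b)
    (X : Ω → ℝ) (hX : Measurable X)
    (hXb : P {ω | X ω ∈ Set.Icc 0 b} = 1)
    (hXpos : 0 < P {ω | 0 < X ω})
    (x : ℝ) (hx : 0 ≤ x) :
    Tendsto (fun p : ℕ => Cp p x b (fun k => ∫ ω, (X ω) ^ k ∂P)) atTop
      (nhds ((1 / b ^ 2) *
        ((∫ ω, (X ω) ^ 2 * Real.exp (x * X ω / b) ∂P) /
          (∫ ω, X ω * Real.exp (x * X ω / b) ∂P)) ^ 2)) := by
  set μ : ℕ → ℝ := fun k => ∫ ω, (X ω) ^ k ∂P with hμdef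
  -- a.e. bound on X
  have hae : ∀ᵐ ω ∂P, X ω ∈ Set.Icc 0 b := by
    have hmeas : MeasurableSet {ω | X ω ∈ Set.Icc 0 b} := hX measurableSet_Icc
    rw [ae_iff]
    have := (prob_compl_eq_zero_iff (μ := P) hmeas).mpr hXb
    simpa [Set.compl_setOf] using this
  have hfacne : ∀ j : ℕ, ((j.factorial : ℝ)) ≠ 0 := fun j =>
    Nat.cast_ne_zero.mpr j.factorial_ne_zero
  -- integrability of powers
  have hpow_int : ∀ k : ℕ, Integrable (fun ω => X ω ^ k) P := by
    intro k
    refine (integrable_const (b ^ k)).mono' (hX.pow_const k).aestronglyMeasurable ?_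
    filter_upwards [hae] with ω hω
    rw [Real.norm_eq_abs, abs_of_nonneg (pow_nonneg hω.1 k)]
    exact pow_le_pow_left₀ hω.1 hω.2 k
  have hμ_nonneg : ∀ k, 0 ≤ μ k := fun k =>
    integral_nonneg_of_ae (by filter_upwards [hae] with ω hω; exact pow_nonneg hω.1 k)
  have hμ_le : ∀ k, μ k ≤ b ^ k := by
    intro k
    have := integral_mono_ae (hpow_int k) (integrable_const (b ^ k))
      (by filter_upwards [hae] with ω hω; exact pow_le_pow_left₀ hω.1 hω.2 k)
    simpa using this
  -- integrability of X^k * exp(xX/b)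
  have hf_int : ∀ k : ℕ, Integrable (fun ω => X ω ^ k * Real.exp (x * X ω / b)) P := by
    intro k
    refine (integrable_const (b ^ k * Real.exp x)).mono'
      (((hX.pow_const k).mul ((measurable_const.mul hX).div_const b).exp)).aestronglyMeasurable ?_
    filter_upwards [hae] with ω hω
    rw [Real.norm_eq_abs,
      abs_of_nonneg (mul_nonneg (pow_nonneg hω.1 k) (Real.exp_pos _).le)]
    have h1 : X ω ^ k ≤ b ^ k := pow_le_pow_left₀ hω.1 hω.2 k
    have h2 : Real.exp (x * X ω / b) ≤ Real.exp x := by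
      apply Real.exp_le_exp.mpr
      rw [div_le_iff₀ hb]
      exact mul_le_mul_of_nonneg_left hω.2 hx
    exact mul_le_mul h1 h2 (Real.exp_pos _).le (pow_nonneg hb.le k)
  -- exponential partial sums
  have hexp : Tendsto (fun n : ℕ => ∑ j ∈ range n, x ^ j / (j.factorial : ℝ)) atTop
      (nhds (Real.exp x)) := by
    rw [Real.exp_eq_exp_ℝ]
    exact (NormedSpace.expSeries_div_hasSum_exp x).tendsto_sum_nat
  have hR_nonneg : ∀ n : ℕ, 0 ≤ Real.exp x - ∑ j ∈ range n, x ^ j / (j.factorial : ℝ) :=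
    fun n => sub_nonneg.mpr (Real.sum_le_exp_of_nonneg hx n)
  have hRlim : Tendsto (fun n : ℕ => Real.exp x - ∑ j ∈ range n, x ^ j / (j.factorial : ℝ))
      atTop (nhds 0) := by
    have := Tendsto.sub
      (tendsto_const_nhds : Tendsto (fun _ : ℕ => Real.exp x) atTop (nhds (Real.exp x))) hexp
    simpa using this
  -- key convergence of the normalized partial sums
  have key : ∀ k : ℕ, Tendsto
      (fun n : ℕ => ∑ j ∈ range n, x ^ j / (j.factorial : ℝ) * (μ (j + k) / b ^ j)) atTop
      (nhds (∫ ω, X ω ^ k * Real.exp (x * X ω / b) ∂P)) := by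
    intro k
    have hterm_int : ∀ j : ℕ,
        Integrable (fun ω => x ^ j / (j.factorial : ℝ) * (X ω ^ (j + k) / b ^ j)) P :=
      fun j => ((hpow_int (j + k)).div_const _).const_mul _
    have heq : ∀ n : ℕ,
        ∑ j ∈ range n, x ^ j / (j.factorial : ℝ) * (μ (j + k) / b ^ j)
          = ∫ ω, ∑ j ∈ range n, x ^ j / (j.factorial : ℝ) * (X ω ^ (j + k) / b ^ j) ∂P := by
      intro n
      rw [integral_finset_sum _ (fun j _ => hterm_int j)]
      refine Finset.sum_congr rfl fun j _ => ?_
      rw [integral_const_mul, integral_div]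
    simp_rw [heq]
    refine tendsto_integral_of_dominated_convergence (fun _ => b ^ k * Real.exp x)
      (fun n => (Finset.aestronglyMeasurable_fun_sum _ fun j _ =>
        (((hX.pow_const _).div_const _).const_mul _).aestronglyMeasurable)) (integrable_const _)
      (fun n => ?_) ?_
    · -- bound
      filter_upwards [hae] with ω hω
      have hnn : 0 ≤ ∑ j ∈ range n, x ^ j / (j.factorial : ℝ) * (X ω ^ (j + k) / b ^ j) :=
        Finset.sum_nonneg fun j _ =>
          mul_nonneg (div_nonneg (pow_nonneg hx j) (Nat.cast_nonneg _))
            (div_nonneg (pow_nonneg hω.1 _) (pow_nonneg hb.le _))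
      rw [Real.norm_eq_abs, abs_of_nonneg hnn]
      calc ∑ j ∈ range n, x ^ j / (j.factorial : ℝ) * (X ω ^ (j + k) / b ^ j)
          ≤ ∑ j ∈ range n, x ^ j / (j.factorial : ℝ) * b ^ k := by
            refine Finset.sum_le_sum fun j _ => ?_
            refine mul_le_mul_of_nonneg_left ?_
              (div_nonneg (pow_nonneg hx j) (Nat.cast_nonneg _))
            rw [div_le_iff₀ (pow_pos hb j)]
            calc X ω ^ (j + k) ≤ b ^ (j + k) := pow_le_pow_left₀ hω.1 hω.2 _
              _ = b ^ k * b ^ j := by rw [pow_add]; ring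
        _ = (∑ j ∈ range n, x ^ j / (j.factorial : ℝ)) * b ^ k := by rw [← Finset.sum_mul]
        _ ≤ Real.exp x * b ^ k :=
            mul_le_mul_of_nonneg_right (Real.sum_le_exp_of_nonneg hx n) (pow_nonneg hb.le k)
        _ = b ^ k * Real.exp x := mul_comm _ _
    · -- pointwise limit
      filter_upwards [hae] with ω hω
      have ht : Tendsto (fun n : ℕ => ∑ j ∈ range n, (x * X ω / b) ^ j / (j.factorial : ℝ))
          atTop (nhds (Real.exp (x * X ω / b))) := by
        rw [Real.exp_eq_exp_ℝ]
        exact (NormedSpace.expSeries_div_hasSum_exp _).tendsto_sum_nat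
      refine ((ht.const_mul (X ω ^ k)).congr fun n => ?_)
      rw [Finset.mul_sum]
      refine Finset.sum_congr rfl fun j _ => ?_
      have hbne : b ≠ 0 := hb.ne'
      field_simp
      rw [div_pow, mul_assoc, div_mul_cancel₀ _ (pow_ne_zero j hbne)]
      ring
  -- error term tends to 0
  have herr : ∀ c : ℕ, Tendsto
      (fun p : ℕ => μ p / b ^ (p - c)
        * (Real.exp x - ∑ j ∈ range (p - c), x ^ j / (j.factorial : ℝ))) atTop (nhds 0) := by
    intro c
    have hg : Tendsto (fun p : ℕ => b ^ c *
        (Real.exp x - ∑ j ∈ range (p - c), x ^ j / (j.factorial : ℝ))) atTop (nhds 0) := by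
      simpa using (hRlim.comp (tendsto_sub_atTop_nat c)).const_mul (b ^ c)
    refine squeeze_zero' ?_ ?_ hg
    · filter_upwards with p
      exact mul_nonneg (div_nonneg (hμ_nonneg p) (pow_pos hb _).le) (hR_nonneg _)
    · filter_upwards [eventually_ge_atTop c] with p hp
      refine mul_le_mul_of_nonneg_right ?_ (hR_nonneg _)
      rw [div_le_iff₀ (pow_pos hb _)]
      calc μ p ≤ b ^ p := hμ_le p
        _ = b ^ c * b ^ (p - c) := by
            rw [← pow_add]
            congr 1
            omega
  -- the normalized numerator / denominator sequences
  set N : ℕ → ℝ := fun p =>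
    (∑ j ∈ range (p - 2), x ^ j / (j.factorial : ℝ) * (μ (j + 2) / b ^ j))
      + μ p / b ^ (p - 2) * (Real.exp x - ∑ j ∈ range (p - 2), x ^ j / (j.factorial : ℝ))
    with hNdef
  set D : ℕ → ℝ := fun p =>
    (∑ j ∈ range (p - 1), x ^ j / (j.factorial : ℝ) * (μ (j + 1) / b ^ j))
      + μ p / b ^ (p - 1) * (Real.exp x - ∑ j ∈ range (p - 1), x ^ j / (j.factorial : ℝ))
    with hDdef
  have hN : Tendsto N atTop (nhds (∫ ω, X ω ^ 2 * Real.exp (x * X ω / b) ∂P)) := by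
    have := ((key 2).comp (tendsto_sub_atTop_nat 2)).add (herr 2)
    simpa using this
  have hD : Tendsto D atTop (nhds (∫ ω, X ω ^ 1 * Real.exp (x * X ω / b) ∂P)) := by
    have := ((key 1).comp (tendsto_sub_atTop_nat 1)).add (herr 1)
    simpa using this
  have hD1 : (∫ ω, X ω ^ 1 * Real.exp (x * X ω / b) ∂P)
      = ∫ ω, X ω * Real.exp (x * X ω / b) ∂P := by simp_rw [pow_one]
  -- positivity of the limit denominator
  have hden_pos : 0 < ∫ ω, X ω * Real.exp (x * X ω / b) ∂P := by
    have hint : Integrable (fun ω => X ω * Real.exp (x * X ω / b)) P := by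
      have := hf_int 1
      simpa [pow_one] using this
    have hnn : 0 ≤ᵐ[P] fun ω => X ω * Real.exp (x * X ω / b) := by
      filter_upwards [hae] with ω hω
      exact mul_nonneg hω.1 (Real.exp_pos _).le
    rw [integral_pos_iff_support_of_nonneg_ae hnn hint]
    refine lt_of_lt_of_le hXpos (measure_mono ?_)
    intro ω hω
    simp only [Function.mem_support]
    exact mul_ne_zero (ne_of_gt hω) (Real.exp_pos _).ne'
  -- algebraic identity relating Cp's numerator/denominator to N, D
  have halg : ∀ (c p : ℕ), c ≤ p →
      μ p * Real.exp x + ∑ j ∈ range (p - c),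
          x ^ j / (j.factorial : ℝ) * (b ^ (p - j - c) * μ (j + c) - μ p)
        = b ^ (p - c) * ((∑ j ∈ range (p - c), x ^ j / (j.factorial : ℝ) * (μ (j + c) / b ^ j))
          + μ p / b ^ (p - c)
            * (Real.exp x - ∑ j ∈ range (p - c), x ^ j / (j.factorial : ℝ))) := by
    intro c p hcp
    have hbpc : (b : ℝ) ^ (p - c) ≠ 0 := (pow_pos hb _).ne'
    have h1 : b ^ (p - c) * (μ p / b ^ (p - c)
        * (Real.exp x - ∑ j ∈ range (p - c), x ^ j / (j.factorial : ℝ)))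
        = μ p * (Real.exp x - ∑ j ∈ range (p - c), x ^ j / (j.factorial : ℝ)) := by
      field_simp
    have h2 : ∀ j ∈ range (p - c),
        b ^ (p - c) * (x ^ j / (j.factorial : ℝ) * (μ (j + c) / b ^ j))
          = x ^ j / (j.factorial : ℝ) * (b ^ (p - j - c) * μ (j + c)) := by
      intro j hj
      have hj' : j ≤ p - c := (Finset.mem_range.mp hj).le
      have hpow : b ^ (p - j - c) * b ^ j = b ^ (p - c) := by
        rw [← pow_add]
        congr 1
        omega
      have hbj : (b : ℝ) ^ j ≠ 0 := (pow_pos hb _).ne'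
      rw [← hpow]
      field_simp
    have h3 : ∑ j ∈ range (p - c),
        x ^ j / (j.factorial : ℝ) * (b ^ (p - j - c) * μ (j + c) - μ p)
        = (∑ j ∈ range (p - c), x ^ j / (j.factorial : ℝ) * (b ^ (p - j - c) * μ (j + c)))
          - (∑ j ∈ range (p - c), x ^ j / (j.factorial : ℝ)) * μ p := by
      rw [Finset.sum_mul, ← Finset.sum_sub_distrib]
      exact Finset.sum_congr rfl fun j _ => by ring
    rw [mul_add, Finset.mul_sum, Finset.sum_congr rfl h2, h1, h3]
    ring
  -- eventual identification of Cp with (N/(b*D))^2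
  have hev : (fun p : ℕ => (N p / (b * D p)) ^ 2)
      =ᶠ[atTop] fun p : ℕ => Cp p x b μ := by
    filter_upwards [eventually_ge_atTop 2] with p hp
    have h2 := halg 2 p hp
    have h1 := halg 1 p (le_trans one_le_two hp)
    have hbp : (b : ℝ) ^ (p - 2) ≠ 0 := (pow_pos hb _).ne'
    have hb1 : (b : ℝ) ^ (p - 1) = b ^ (p - 2) * b := by
      rw [show p - 1 = (p - 2) + 1 by omega, pow_succ]
    unfold Cp
    rw [h2, h1]
    have key2 : ∀ A C : ℝ, b ^ (p - 2) * A / (b ^ (p - 1) * C) = A / (b * C) := by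
      intro A C
      rw [hb1, mul_assoc]
      exact mul_div_mul_left _ _ hbp
    rw [key2]
  -- conclusion
  have hT : Tendsto (fun p : ℕ => (N p / (b * D p)) ^ 2) atTop
      (nhds (((∫ ω, X ω ^ 2 * Real.exp (x * X ω / b) ∂P)
        / (b * (∫ ω, X ω * Real.exp (x * X ω / b) ∂P))) ^ 2)) := by
    refine Tendsto.pow ?_ 2
    refine hN.div (tendsto_const_nhds.mul ?_) (mul_pos hb hden_pos).ne'
    rw [← hD1]
    exact hD
  have hfinal :
      ((∫ ω, X ω ^ 2 * Real.exp (x * X ω / b) ∂P)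
        / (b * (∫ ω, X ω * Real.exp (x * X ω / b) ∂P))) ^ 2
      = (1 / b ^ 2) *
        ((∫ ω, (X ω) ^ 2 * Real.exp (x * X ω / b) ∂P) /
          (∫ ω, X ω * Real.exp (x * X ω / b) ∂P)) ^ 2 := by
    rw [div_pow, div_pow, mul_pow]
    field_simp
    simp_rw [mul_comm x]
  rw [← hfinal]
  exact hT.congr' hev
end

section
/- Let X_1, …, X_n be independent random variables with P(X_i ∈ [0, b_i]) = 1, b_i > 0 and P(X_i > 0) > 0 for each i. Let S_n = ∑_{i=1}^n X_i and D_n := ∑_{j=1}^n (E[X_j^2] / E[X_j])^2. Then for all t > 0: P(S_n − E[S_n] ≥ t) ≤ exp( −2t^2 / ∑_{i=1}^n ( E[X_i^2 exp(4tX_i/D_n)] / E[X_i exp(4tX_i/D_n)] )^2 ). -/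
open Real Finset MeasureTheory ProbabilityTheory

section AuxLemmas

variable {Ω : Type*} [MeasurableSpace Ω] {P : Measure Ω} [IsProbabilityMeasure P]
variable {Y g : Ω → ℝ} {b B : ℝ}

lemma hz_int (hY : Measurable Y) (hY0 : ∀ ω, 0 ≤ Y ω) (hYb : ∀ ω, Y ω ≤ b)
    (hg : Measurable g) (hgB : ∀ ω, |g ω| ≤ B) (u : ℝ) :
    Integrable (fun ω => g ω * Real.exp (u * Y ω)) P := by
  refine (integrable_const (B * Real.exp (|u| * b))).mono'
    (hg.mul ((hY.const_mul u).exp)).aestronglyMeasurable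
    (Filter.Eventually.of_forall fun ω => ?_)
  have h1 : u * Y ω ≤ |u| * b :=
    (mul_le_mul_of_nonneg_right (le_abs_self u) (hY0 ω)).trans
      (mul_le_mul_of_nonneg_left (hYb ω) (abs_nonneg u))
  have h2 : ‖g ω * Real.exp (u * Y ω)‖ = |g ω| * Real.exp (u * Y ω) := by
    rw [norm_mul, Real.norm_eq_abs, Real.norm_eq_abs, abs_of_pos (Real.exp_pos _)]
  rw [h2]
  exact mul_le_mul (hgB ω) (Real.exp_le_exp.2 h1) (Real.exp_pos _).le
    ((abs_nonneg _).trans (hgB ω))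

lemma hz_deriv (hY : Measurable Y) (hY0 : ∀ ω, 0 ≤ Y ω) (hYb : ∀ ω, Y ω ≤ b)
    (hg : Measurable g) (hgB : ∀ ω, |g ω| ≤ B) (u₀ : ℝ) :
    HasDerivAt (fun u => ∫ ω, g ω * Real.exp (u * Y ω) ∂P)
      (∫ ω, (g ω * Y ω) * Real.exp (u₀ * Y ω) ∂P) u₀ := by
  have hB0 : 0 ≤ B := by
    have : Nonempty Ω := by
      by_contra h
      have : P Set.univ = 0 := by
        rw [Set.univ_eq_empty_iff.2 (not_nonempty_iff.1 h)]; simp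
      simp [measure_univ] at this
    obtain ⟨ω⟩ := this
    exact (abs_nonneg _).trans (hgB ω)
  have hb0 : 0 ≤ b := by
    have : Nonempty Ω := by
      by_contra h
      have : P Set.univ = 0 := by
        rw [Set.univ_eq_empty_iff.2 (not_nonempty_iff.1 h)]; simp
      simp [measure_univ] at this
    obtain ⟨ω⟩ := this
    exact (hY0 ω).trans (hYb ω)
  refine (hasDerivAt_integral_of_dominated_loc_of_deriv_le (Metric.ball_mem_nhds u₀ one_pos)
    (F := fun u ω => g ω * Real.exp (u * Y ω))
    (F' := fun u ω => (g ω * Y ω) * Real.exp (u * Y ω))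
    (bound := fun _ => (B * b) * Real.exp ((|u₀| + 1) * b))
    (Filter.Eventually.of_forall fun u =>
      (hg.mul ((hY.const_mul u).exp)).aestronglyMeasurable)
    (hz_int hY hY0 hYb hg hgB u₀)
    (((hg.mul hY).mul ((hY.const_mul u₀).exp)).aestronglyMeasurable)
    (Filter.Eventually.of_forall fun ω => fun u hu => ?_)
    (integrable_const _)
    (Filter.Eventually.of_forall fun ω => fun u _ => ?_)).2
  · -- bound
    have habs : |u| ≤ |u₀| + 1 := by
      have := Metric.mem_ball.1 hu
      rw [Real.dist_eq] at this
      have := abs_sub_abs_le_abs_sub u u₀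
      linarith
    have h1 : u * Y ω ≤ (|u₀| + 1) * b :=
      (mul_le_mul_of_nonneg_right (le_abs_self u) (hY0 ω)).trans
        (mul_le_mul (habs) (hYb ω) (hY0 ω) (by positivity))
    have h2 : ‖g ω * Y ω * Real.exp (u * Y ω)‖
        = |g ω| * |Y ω| * Real.exp (u * Y ω) := by
      rw [norm_mul, norm_mul, Real.norm_eq_abs, Real.norm_eq_abs, Real.norm_eq_abs,
        abs_of_pos (Real.exp_pos _)]
    rw [h2]
    have hY' : |Y ω| ≤ b := by rw [abs_of_nonneg (hY0 ω)]; exact hYb ω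
    exact mul_le_mul (mul_le_mul (hgB ω) hY' (abs_nonneg _) hB0)
      (Real.exp_le_exp.2 h1) (Real.exp_pos _).le (by positivity)
  · -- differentiability
    have h := ((hasDerivAt_mul_const (Y ω)).exp.const_mul (g ω) :
      HasDerivAt (fun u => g ω * Real.exp (u * Y ω))
        (g ω * (Real.exp (u * Y ω) * Y ω)) u)
    exact h.congr_deriv (by ring)

lemma hz_pos (hY : Measurable Y) (hY0 : ∀ ω, 0 ≤ Y ω) (hYb : ∀ ω, Y ω ≤ b)
    (hpos : 0 < P {ω | 0 < Y ω})
    (hg : Measurable g) (hgB : ∀ ω, |g ω| ≤ B)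
    (hg0 : ∀ ω, 0 ≤ g ω) (hgpos : ∀ ω, 0 < Y ω → 0 < g ω) (u : ℝ) :
    0 < ∫ ω, g ω * Real.exp (u * Y ω) ∂P := by
  rw [integral_pos_iff_support_of_nonneg
    (fun ω => mul_nonneg (hg0 ω) (Real.exp_pos _).le) (hz_int hY hY0 hYb hg hgB u)]
  refine hpos.trans_le (measure_mono fun ω hω => ?_)
  exact (mul_pos (hgpos ω hω) (Real.exp_pos _)).ne'

lemma hz_cheb (hY : Measurable Y) (hY0 : ∀ ω, 0 ≤ Y ω) (hYb : ∀ ω, Y ω ≤ b)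
    {u v : ℝ} (huv : u ≤ v) :
    (∫ ω, Y ω ^ 2 * Real.exp (u * Y ω) ∂P) * (∫ ω, Y ω * Real.exp (v * Y ω) ∂P) ≤
    (∫ ω, Y ω ^ 2 * Real.exp (v * Y ω) ∂P) * (∫ ω, Y ω * Real.exp (u * Y ω) ∂P) := by
  have hYsq : Measurable (fun ω => Y ω ^ 2) := hY.pow_const 2
  have hYsqB : ∀ ω, |Y ω ^ 2| ≤ b ^ 2 := fun ω => by
    rw [abs_of_nonneg (sq_nonneg _)]
    exact pow_le_pow_left₀ (hY0 ω) (hYb ω) 2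
  have hYB : ∀ ω, |Y ω| ≤ b := fun ω => by
    rw [abs_of_nonneg (hY0 ω)]; exact hYb ω
  have hq : ∀ s : ℝ, Integrable (fun ω => Y ω ^ 2 * Real.exp (s * Y ω)) P :=
    fun s => hz_int hY hY0 hYb hYsq hYsqB s
  have hr : ∀ s : ℝ, Integrable (fun ω => Y ω * Real.exp (s * Y ω)) P :=
    fun s => hz_int hY hY0 hYb hY hYB s
  -- key pointwise inequality
  have key : ∀ x y : ℝ, 0 ≤ x → 0 ≤ y →
      0 ≤ x ^ 2 * Real.exp (v * x) * (y * Real.exp (u * y))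
        + x * Real.exp (u * x) * (y ^ 2 * Real.exp (v * y))
        - (x ^ 2 * Real.exp (u * x) * (y * Real.exp (v * y))
        + x * Real.exp (v * x) * (y ^ 2 * Real.exp (u * y))) := by
    intro x y hx hy
    have hmain : 0 ≤ (x - y) * (Real.exp ((v - u) * x) - Real.exp ((v - u) * y)) := by
      rcases le_total x y with h | h
      · have h2 : Real.exp ((v - u) * x) ≤ Real.exp ((v - u) * y) :=
          Real.exp_le_exp.2 (mul_le_mul_of_nonneg_left h (by linarith))
        nlinarith
      · have h2 : Real.exp ((v - u) * y) ≤ Real.exp ((v - u) * x) :=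
          Real.exp_le_exp.2 (mul_le_mul_of_nonneg_left h (by linarith))
        nlinarith
    have hrw : x ^ 2 * Real.exp (v * x) * (y * Real.exp (u * y))
        + x * Real.exp (u * x) * (y ^ 2 * Real.exp (v * y))
        - (x ^ 2 * Real.exp (u * x) * (y * Real.exp (v * y))
        + x * Real.exp (v * x) * (y ^ 2 * Real.exp (u * y)))
        = x * y * Real.exp (u * x) * Real.exp (u * y) *
          ((x - y) * (Real.exp ((v - u) * x) - Real.exp ((v - u) * y))) := by
      rw [show v * x = u * x + (v - u) * x by ring, show v * y = u * y + (v - u) * y by ring,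
        Real.exp_add, Real.exp_add]
      ring
    rw [hrw]
    positivity
  -- integral over the product space
  have hF1 : Integrable (fun z : Ω × Ω =>
      (Y z.1 ^ 2 * Real.exp (v * Y z.1)) * (Y z.2 * Real.exp (u * Y z.2))) (P.prod P) :=
    (hq v).mul_prod (hr u)
  have hF2 : Integrable (fun z : Ω × Ω =>
      (Y z.1 * Real.exp (u * Y z.1)) * (Y z.2 ^ 2 * Real.exp (v * Y z.2))) (P.prod P) :=
    (hr u).mul_prod (hq v)
  have hF3 : Integrable (fun z : Ω × Ω =>
      (Y z.1 ^ 2 * Real.exp (u * Y z.1)) * (Y z.2 * Real.exp (v * Y z.2))) (P.prod P) :=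
    (hq u).mul_prod (hr v)
  have hF4 : Integrable (fun z : Ω × Ω =>
      (Y z.1 * Real.exp (v * Y z.1)) * (Y z.2 ^ 2 * Real.exp (u * Y z.2))) (P.prod P) :=
    (hr v).mul_prod (hq u)
  have hnn : 0 ≤ ∫ z : Ω × Ω,
      ((Y z.1 ^ 2 * Real.exp (v * Y z.1)) * (Y z.2 * Real.exp (u * Y z.2))
       + (Y z.1 * Real.exp (u * Y z.1)) * (Y z.2 ^ 2 * Real.exp (v * Y z.2))
       - ((Y z.1 ^ 2 * Real.exp (u * Y z.1)) * (Y z.2 * Real.exp (v * Y z.2))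
       + (Y z.1 * Real.exp (v * Y z.1)) * (Y z.2 ^ 2 * Real.exp (u * Y z.2)))) ∂(P.prod P) :=
    integral_nonneg fun z => key (Y z.1) (Y z.2) (hY0 _) (hY0 _)
  have hF12 : Integrable (fun z : Ω × Ω =>
      (Y z.1 ^ 2 * Real.exp (v * Y z.1)) * (Y z.2 * Real.exp (u * Y z.2))
      + (Y z.1 * Real.exp (u * Y z.1)) * (Y z.2 ^ 2 * Real.exp (v * Y z.2))) (P.prod P) :=
    hF1.add hF2
  have hF34 : Integrable (fun z : Ω × Ω =>
      (Y z.1 ^ 2 * Real.exp (u * Y z.1)) * (Y z.2 * Real.exp (v * Y z.2))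
      + (Y z.1 * Real.exp (v * Y z.1)) * (Y z.2 ^ 2 * Real.exp (u * Y z.2))) (P.prod P) :=
    hF3.add hF4
  rw [integral_sub hF12 hF34, integral_add hF1 hF2, integral_add hF3 hF4,
    integral_prod_mul (f := fun ω => Y ω ^ 2 * Real.exp (v * Y ω))
      (g := fun ω => Y ω * Real.exp (u * Y ω)),
    integral_prod_mul (f := fun ω => Y ω * Real.exp (u * Y ω))
      (g := fun ω => Y ω ^ 2 * Real.exp (v * Y ω)),
    integral_prod_mul (f := fun ω => Y ω ^ 2 * Real.exp (u * Y ω))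
      (g := fun ω => Y ω * Real.exp (v * Y ω)),
    integral_prod_mul (f := fun ω => Y ω * Real.exp (v * Y ω))
      (g := fun ω => Y ω ^ 2 * Real.exp (u * Y ω))] at hnn
  linarith

lemma hz_core (hY : Measurable Y) (hY0 : ∀ ω, 0 ≤ Y ω) (hYb : ∀ ω, Y ω ≤ b)
    (hpos : 0 < P {ω | 0 < Y ω}) {lam c : ℝ} (hlam : 0 ≤ lam) (hc : 0 < c)
    (hratio : ∀ u, 0 ≤ u → u ≤ lam →
      (∫ ω, Y ω ^ 2 * Real.exp (u * Y ω) ∂P) ≤ c * ∫ ω, Y ω * Real.exp (u * Y ω) ∂P) :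
    ∫ ω, Real.exp (lam * Y ω) ∂P ≤
      Real.exp (lam * (∫ ω, Y ω ∂P) + lam ^ 2 * c ^ 2 / 8) := by
  have hYB : ∀ ω, |Y ω| ≤ b := fun ω => by rw [abs_of_nonneg (hY0 ω)]; exact hYb ω
  have hd0 : ∀ u : ℝ, HasDerivAt (fun w => ∫ ω, Real.exp (w * Y ω) ∂P)
      (∫ ω, Y ω * Real.exp (u * Y ω) ∂P) u := by
    intro u
    have h := hz_deriv (P := P) (g := fun _ => (1:ℝ)) (B := 1) hY hY0 hYb measurable_const
      (fun ω => by norm_num) u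
    simpa only [one_mul] using h
  have hd1 : ∀ u : ℝ, HasDerivAt (fun w => ∫ ω, Y ω * Real.exp (w * Y ω) ∂P)
      (∫ ω, Y ω ^ 2 * Real.exp (u * Y ω) ∂P) u := by
    intro u
    have h := hz_deriv (P := P) (g := Y) (B := b) hY hY0 hYb hY hYB u
    simpa only [← pow_two] using h
  have h0pos : ∀ u : ℝ, 0 < ∫ ω, Real.exp (u * Y ω) ∂P := by
    intro u
    have h := hz_int (P := P) (g := fun _ => (1:ℝ)) (B := 1) hY hY0 hYb measurable_const
      (fun ω => by norm_num) u
    simp only [one_mul] at h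
    exact integral_exp_pos h
  have h1pos : ∀ u : ℝ, 0 < ∫ ω, Y ω * Real.exp (u * Y ω) ∂P :=
    fun u => hz_pos hY hY0 hYb hpos hY hYB hY0 (fun ω h => h) u
  -- derivative of the ratio H
  have hH : ∀ u : ℝ, HasDerivAt
      (fun w => (∫ ω, Y ω * Real.exp (w * Y ω) ∂P) / (∫ ω, Real.exp (w * Y ω) ∂P))
      (((∫ ω, Y ω ^ 2 * Real.exp (u * Y ω) ∂P) * (∫ ω, Real.exp (u * Y ω) ∂P)
        - (∫ ω, Y ω * Real.exp (u * Y ω) ∂P) * (∫ ω, Y ω * Real.exp (u * Y ω) ∂P))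
        / (∫ ω, Real.exp (u * Y ω) ∂P) ^ 2) u :=
    fun u => (hd1 u).div (hd0 u) (h0pos u).ne'
  -- Step 1: H u ≤ H 0 + u * c^2/4 on [0, lam]
  have hstep1 : ∀ u, 0 ≤ u → u ≤ lam →
      (∫ ω, Y ω * Real.exp (u * Y ω) ∂P) / (∫ ω, Real.exp (u * Y ω) ∂P) ≤
      (∫ ω, Y ω ∂P) + u * (c ^ 2 / 4) := by
    intro u hu0 hulam
    have hψd : ∀ w : ℝ, HasDerivAt
        (fun w => w * (c ^ 2 / 4)
          - (∫ ω, Y ω * Real.exp (w * Y ω) ∂P) / (∫ ω, Real.exp (w * Y ω) ∂P))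
        (c ^ 2 / 4 -
          (((∫ ω, Y ω ^ 2 * Real.exp (w * Y ω) ∂P) * (∫ ω, Real.exp (w * Y ω) ∂P)
          - (∫ ω, Y ω * Real.exp (w * Y ω) ∂P) * (∫ ω, Y ω * Real.exp (w * Y ω) ∂P))
          / (∫ ω, Real.exp (w * Y ω) ∂P) ^ 2)) w :=
      fun w => (hasDerivAt_mul_const (c ^ 2 / 4)).sub (hH w)
    have hmono : MonotoneOn
        (fun w => w * (c ^ 2 / 4)
          - (∫ ω, Y ω * Real.exp (w * Y ω) ∂P) / (∫ ω, Real.exp (w * Y ω) ∂P))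
        (Set.Icc 0 lam) := by
      apply monotoneOn_of_deriv_nonneg (convex_Icc 0 lam)
      · exact fun x _ => ((hψd x).differentiableAt).continuousAt.continuousWithinAt
      · exact fun x _ => ((hψd x).differentiableAt).differentiableWithinAt
      · intro x hx
        rw [interior_Icc] at hx
        rw [(hψd x).deriv]
        have hE2le := hratio x hx.1.le hx.2.le
        have h0 := h0pos x
        have h1 := h1pos x
        have key : ((∫ ω, Y ω ^ 2 * Real.exp (x * Y ω) ∂P) * (∫ ω, Real.exp (x * Y ω) ∂P)
            - (∫ ω, Y ω * Real.exp (x * Y ω) ∂P) * (∫ ω, Y ω * Real.exp (x * Y ω) ∂P))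
            / (∫ ω, Real.exp (x * Y ω) ∂P) ^ 2 ≤ c ^ 2 / 4 := by
          rw [div_le_iff₀ (by positivity)]
          nlinarith [sq_nonneg (c * (∫ ω, Real.exp (x * Y ω) ∂P)
              - 2 * ∫ ω, Y ω * Real.exp (x * Y ω) ∂P),
            mul_le_mul_of_nonneg_right hE2le h0.le]
        linarith
    have h := hmono (Set.left_mem_Icc.2 hlam) (Set.mem_Icc.2 ⟨hu0, hulam⟩) hu0
    simp only [zero_mul, Real.exp_zero, mul_one, integral_const, measure_univ,
      ENNReal.toReal_one, probReal_univ, smul_eq_mul, one_mul, div_one] at h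
    linarith
  -- Step 2: the function φ
  have hφd : ∀ w : ℝ, HasDerivAt
      (fun w => w * (∫ ω, Y ω ∂P) + w ^ 2 * (c ^ 2 / 8) - Real.log (∫ ω, Real.exp (w * Y ω) ∂P))
      ((∫ ω, Y ω ∂P) + w * (c ^ 2 / 4)
        - (∫ ω, Y ω * Real.exp (w * Y ω) ∂P) / (∫ ω, Real.exp (w * Y ω) ∂P)) w := by
    intro w
    have h := ((hasDerivAt_mul_const (∫ ω, Y ω ∂P)).add ((hasDerivAt_pow 2 w).mul_const (c ^ 2 / 8))).sub
      ((hd0 w).log (h0pos w).ne')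
    exact h.congr_deriv (by ring)
  have hmono2 : MonotoneOn
      (fun w => w * (∫ ω, Y ω ∂P) + w ^ 2 * (c ^ 2 / 8) - Real.log (∫ ω, Real.exp (w * Y ω) ∂P))
      (Set.Icc 0 lam) := by
    apply monotoneOn_of_deriv_nonneg (convex_Icc 0 lam)
    · exact fun x _ => ((hφd x).differentiableAt).continuousAt.continuousWithinAt
    · exact fun x _ => ((hφd x).differentiableAt).differentiableWithinAt
    · intro x hx
      rw [interior_Icc] at hx
      rw [(hφd x).deriv]
      have := hstep1 x hx.1.le hx.2.le
      linarith
  have hfinal := hmono2 (Set.left_mem_Icc.2 hlam) (Set.right_mem_Icc.2 hlam) hlam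
  norm_num [Real.exp_zero, measure_univ] at hfinal
  have hlog : Real.log (∫ ω, Real.exp (lam * Y ω) ∂P) ≤
      lam * (∫ ω, Y ω ∂P) + lam ^ 2 * c ^ 2 / 8 := by
    nlinarith [hfinal]
  calc ∫ ω, Real.exp (lam * Y ω) ∂P
      = Real.exp (Real.log (∫ ω, Real.exp (lam * Y ω) ∂P)) := (Real.exp_log (h0pos lam)).symm
    _ ≤ _ := Real.exp_le_exp.2 hlog

end AuxLemmas

theorem statement11 {Ω : Type*} [MeasurableSpace Ω] (P : Measure Ω) [IsProbabilityMeasure P]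
    (n : ℕ) (X : Fin n → Ω → ℝ) (b : Fin n → ℝ)
    (hX : ∀ i, Measurable (X i))
    (hb : ∀ i, 0 < b i)
    (hrange : ∀ i, P {ω | X i ω ∈ Set.Icc 0 (b i)} = 1)
    (hpos : ∀ i, 0 < P {ω | 0 < X i ω})
    (hindep : iIndepFun X P)
    (t : ℝ) (ht : 0 < t) :
    P {ω | t ≤ (∑ i, X i ω) - ∫ ω', ∑ i, X i ω' ∂P} ≤
      ENNReal.ofReal (Real.exp (-2 * t ^ 2 /
        ∑ i,
          ((∫ ω, (X i ω) ^ 2 *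
              Real.exp (4 * t * X i ω / ∑ j, ((∫ ω', (X j ω') ^ 2 ∂P) / ∫ ω', X j ω' ∂P) ^ 2) ∂P) /
           (∫ ω, X i ω *
              Real.exp (4 * t * X i ω / ∑ j, ((∫ ω', (X j ω') ^ 2 ∂P) / ∫ ω', X j ω' ∂P) ^ 2) ∂P)) ^ 2)) := by
  classical
  rcases Nat.eq_zero_or_pos n with hn | hn
  · subst hn
    have hset : {ω : Ω | t ≤ (∑ i : Fin 0, X i ω) - ∫ ω', ∑ i : Fin 0, X i ω' ∂P} = ∅ := by
      ext ω
      simp [not_le, ht]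
    rw [hset]
    simp
  -- clamped variables
  obtain ⟨Y, hYdef⟩ : ∃ Y : Fin n → Ω → ℝ, ∀ i ω, Y i ω = min (max (X i ω) 0) (b i) :=
    ⟨_, fun _ _ => rfl⟩
  have hYmeas : ∀ i, Measurable (Y i) := by
    intro i
    have hfe : Y i = fun ω => min (max (X i ω) 0) (b i) := funext (hYdef i)
    rw [hfe]
    exact ((hX i).max measurable_const).min measurable_const
  have hY0 : ∀ i ω, 0 ≤ Y i ω := fun i ω => by
    rw [hYdef i ω]; exact le_min (le_max_right _ _) (hb i).le
  have hYb : ∀ i ω, Y i ω ≤ b i := fun i ω => by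
    rw [hYdef i ω]; exact min_le_right _ _
  have hae : ∀ i, X i =ᵐ[P] Y i := by
    intro i
    have hmeas : MeasurableSet {ω | X i ω ∈ Set.Icc 0 (b i)} := (hX i) measurableSet_Icc
    have hmem : ∀ᵐ ω ∂P, X i ω ∈ Set.Icc 0 (b i) := by
      rw [ae_iff]
      have : {a : Ω | ¬ X i a ∈ Set.Icc 0 (b i)} = {ω | X i ω ∈ Set.Icc 0 (b i)}ᶜ := by
        rw [Set.compl_setOf]
      rw [this, measure_compl hmeas (measure_ne_top _ _), hrange i, measure_univ, tsub_self]
    filter_upwards [hmem] with ω hω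
    rw [hYdef i ω, max_eq_left hω.1, min_eq_left hω.2]
  have hposY : ∀ i, 0 < P {ω | 0 < Y i ω} := by
    intro i
    have hPeq : P {ω | 0 < X i ω} = P {ω | 0 < Y i ω} := by
      apply measure_congr
      rw [Filter.eventuallyEq_set]
      filter_upwards [hae i] with ω hω
      simp only [Set.mem_setOf_eq, hω]
    rw [← hPeq]
    exact hpos i
  -- basic integrability / positivity facts for Y
  have hYB : ∀ i ω, |Y i ω| ≤ b i := fun i ω => by
    rw [abs_of_nonneg (hY0 i ω)]; exact hYb i ω
  have hYsqB : ∀ i ω, |Y i ω ^ 2| ≤ b i ^ 2 := fun i ω => by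
    rw [abs_of_nonneg (sq_nonneg _)]
    exact pow_le_pow_left₀ (hY0 i ω) (hYb i ω) 2
  have hE1pos : ∀ i (u : ℝ), 0 < ∫ ω, Y i ω * Real.exp (u * Y i ω) ∂P :=
    fun i u => hz_pos (hYmeas i) (hY0 i) (hYb i) (hposY i) (hYmeas i) (hYB i)
      (hY0 i) (fun ω h => h) u
  have hE2pos : ∀ i (u : ℝ), 0 < ∫ ω, Y i ω ^ 2 * Real.exp (u * Y i ω) ∂P :=
    fun i u => hz_pos (hYmeas i) (hY0 i) (hYb i) (hposY i) ((hYmeas i).pow_const 2)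
      (hYsqB i) (fun ω => sq_nonneg _) (fun ω h => pow_pos h 2) u
  -- the integrals appearing in the statement, in terms of Y
  have hIX : ∀ i, ∫ ω', X i ω' ∂P = ∫ ω, Y i ω ∂P := fun i => integral_congr_ae (hae i)
  have hIX2 : ∀ i, ∫ ω', (X i ω') ^ 2 ∂P = ∫ ω, Y i ω ^ 2 ∂P := fun i =>
    integral_congr_ae (by filter_upwards [hae i] with ω hω; rw [hω])
  have hIXpos : ∀ i, 0 < ∫ ω', X i ω' ∂P := by
    intro i
    rw [hIX i]
    have := hE1pos i 0
    simpa using this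
  have hIX2pos : ∀ i, 0 < ∫ ω', (X i ω') ^ 2 ∂P := by
    intro i
    rw [hIX2 i]
    have := hE2pos i 0
    simpa using this
  have huniv : (Finset.univ : Finset (Fin n)).Nonempty := ⟨⟨0, hn⟩, Finset.mem_univ _⟩
  obtain ⟨D, hD⟩ : ∃ D : ℝ, D = ∑ j, ((∫ ω', (X j ω') ^ 2 ∂P) / ∫ ω', X j ω' ∂P) ^ 2 :=
    ⟨_, rfl⟩
  rw [← hD]
  have hDpos : 0 < D := by
    rw [hD]
    exact Finset.sum_pos (fun j _ => pow_pos (div_pos (hIX2pos j) (hIXpos j)) 2) huniv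
  obtain ⟨lam0, hlam0⟩ : ∃ l : ℝ, l = 4 * t / D := ⟨_, rfl⟩
  have hlam0pos : 0 < lam0 := by rw [hlam0]; positivity
  -- the statement's tilted integrals in terms of Y
  have hgI2 : ∀ i, (∫ ω, (X i ω) ^ 2 * Real.exp (4 * t * X i ω / D) ∂P)
      = ∫ ω, Y i ω ^ 2 * Real.exp (lam0 * Y i ω) ∂P := by
    intro i
    apply integral_congr_ae
    filter_upwards [hae i] with ω hω
    rw [hω, hlam0]
    congr 1
    · ring
  have hgI1 : ∀ i, (∫ ω, X i ω * Real.exp (4 * t * X i ω / D) ∂P)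
      = ∫ ω, Y i ω * Real.exp (lam0 * Y i ω) ∂P := by
    intro i
    apply integral_congr_ae
    filter_upwards [hae i] with ω hω
    rw [hω, hlam0]
    congr 1
    · ring
  -- the constants c i and C
  obtain ⟨c, hcdef⟩ : ∃ c : Fin n → ℝ, ∀ i, c i =
      (∫ ω, Y i ω ^ 2 * Real.exp (lam0 * Y i ω) ∂P) /
      (∫ ω, Y i ω * Real.exp (lam0 * Y i ω) ∂P) := ⟨_, fun _ => rfl⟩
  have hcpos : ∀ i, 0 < c i := fun i => by
    rw [hcdef i]; exact div_pos (hE2pos i lam0) (hE1pos i lam0)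
  obtain ⟨C, hC⟩ : ∃ C : ℝ, C = ∑ i, c i ^ 2 := ⟨_, rfl⟩
  have hCpos : 0 < C := by
    rw [hC]; exact Finset.sum_pos (fun i _ => pow_pos (hcpos i) 2) huniv
  -- D ≤ C by monotonicity of the tilted ratio (Chebyshev correlation)
  have hDC : D ≤ C := by
    rw [hD, hC]
    apply Finset.sum_le_sum
    intro j _
    have hch := hz_cheb (P := P) (hYmeas j) (hY0 j) (hYb j) (u := 0) (v := lam0) hlam0pos.le
    simp only [zero_mul, Real.exp_zero, mul_one] at hch
    have hratio0 : (∫ ω', (X j ω') ^ 2 ∂P) / ∫ ω', X j ω' ∂P ≤ c j := by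
      rw [hIX j, hIX2 j, hcdef j]
      rw [div_le_div_iff₀ (by simpa using hE1pos j 0) (hE1pos j lam0)]
      simpa using hch
    have h0 : 0 ≤ (∫ ω', (X j ω') ^ 2 ∂P) / ∫ ω', X j ω' ∂P :=
      (div_pos (hIX2pos j) (hIXpos j)).le
    exact pow_le_pow_left₀ h0 hratio0 2
  obtain ⟨lam, hlam⟩ : ∃ l : ℝ, l = 4 * t / C := ⟨_, rfl⟩
  have hlampos : 0 < lam := by rw [hlam]; positivity
  have hlamle : lam ≤ lam0 := by
    rw [hlam, hlam0]
    gcongr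

  -- ratio bound on [0, lam]
  have hratio : ∀ i, ∀ u, 0 ≤ u → u ≤ lam →
      (∫ ω, Y i ω ^ 2 * Real.exp (u * Y i ω) ∂P) ≤
        c i * ∫ ω, Y i ω * Real.exp (u * Y i ω) ∂P := by
    intro i u hu0 hulam
    have hch := hz_cheb (P := P) (hYmeas i) (hY0 i) (hYb i) (u := u) (v := lam0)
      (hulam.trans hlamle)
    rw [hcdef i, div_mul_eq_mul_div, le_div_iff₀ (hE1pos i lam0)]
    linarith
  -- the per-variable mgf bound
  have hcore : ∀ i, ∫ ω, Real.exp (lam * Y i ω) ∂P ≤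
      Real.exp (lam * (∫ ω, Y i ω ∂P) + lam ^ 2 * c i ^ 2 / 8) := fun i =>
    hz_core (hYmeas i) (hY0 i) (hYb i) (hposY i) hlampos.le (hcpos i) (hratio i)
  -- integrability of the exponentials
  have hintY : ∀ i (u : ℝ), Integrable (fun ω => Real.exp (u * Y i ω)) P := by
    intro i u
    have := hz_int (P := P) (g := fun _ => (1:ℝ)) (B := 1) (hYmeas i) (hY0 i) (hYb i)
      measurable_const (fun ω => by norm_num) u
    simpa using this
  have hintexp : ∀ i, Integrable (fun ω => Real.exp (lam * X i ω)) P := by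
    intro i
    exact (hintY i lam).congr (by filter_upwards [hae i] with ω hω; rw [hω])
  have hintS : Integrable (fun ω => Real.exp (lam * (∑ i, X i ω))) P := by
    have := hindep.integrable_exp_mul_sum hX (s := Finset.univ) (fun i _ => hintexp i)
    apply this.congr
    filter_upwards with ω
    rw [Finset.sum_apply]
  obtain ⟨ES, hES⟩ : ∃ E : ℝ, E = ∫ ω', ∑ i, X i ω' ∂P := ⟨_, rfl⟩
  rw [← hES]
  have hintShift : Integrable (fun ω => Real.exp (lam * ((∑ i, X i ω) - ES))) P := by
    have : (fun ω => Real.exp (lam * ((∑ i, X i ω) - ES)))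
        = fun ω => Real.exp (lam * (∑ i, X i ω)) * Real.exp (-(lam * ES)) := by
      funext ω
      rw [← Real.exp_add]
      congr 1
      ring
    rw [this]
    exact hintS.mul_const _
  -- Chernoff bound
  have hchern := measure_ge_le_exp_mul_mgf (μ := P) (X := fun ω => (∑ i, X i ω) - ES)
    (t := lam) t hlampos.le hintShift
  -- compute / bound the mgf
  have hintXi : ∀ i, Integrable (X i) P := by
    intro i
    have h1 := hz_int (P := P) (g := Y i) (B := b i) (hYmeas i) (hY0 i) (hYb i)
      (hYmeas i) (hYB i) 0
    simp only [zero_mul, Real.exp_zero, mul_one] at h1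
    exact h1.congr (hae i).symm
  have hESsum : ES = ∑ i, ∫ ω, Y i ω ∂P := by
    rw [hES, integral_finset_sum _ (fun i _ => hintXi i)]
    exact Finset.sum_congr rfl fun i _ => hIX i
  have hmgfXi : ∀ i, mgf (X i) P lam = ∫ ω, Real.exp (lam * Y i ω) ∂P := by
    intro i
    apply integral_congr_ae
    filter_upwards [hae i] with ω hω
    rw [hω]
  have hmgfsum : mgf (fun ω => (∑ i, X i ω) - ES) P lam
      = Real.exp (-(lam * ES)) * ∏ i, mgf (X i) P lam := by
    have h1 : (fun ω => Real.exp (lam * ((∑ i, X i ω) - ES)))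
        = fun ω => Real.exp (lam * ((∑ i, X i) ω)) * Real.exp (-(lam * ES)) := by
      funext ω
      rw [Finset.sum_apply, ← Real.exp_add]
      congr 1
      ring
    rw [mgf, h1, integral_mul_const]
    rw [show (∫ ω, Real.exp (lam * ((∑ i, X i) ω)) ∂P) = mgf (∑ i, X i) P lam from rfl]
    rw [hindep.mgf_sum hX Finset.univ, mul_comm]
  -- bound the product of mgfs
  have hprodbound : ∏ i, mgf (X i) P lam ≤ Real.exp (lam * ES + lam ^ 2 * C / 8) := by
    have h1 : ∏ i, mgf (X i) P lam ≤
        ∏ i, Real.exp (lam * (∫ ω, Y i ω ∂P) + lam ^ 2 * c i ^ 2 / 8) := by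
      apply Finset.prod_le_prod (fun i _ => mgf_nonneg)
      intro i _
      rw [hmgfXi i]
      exact hcore i
    refine h1.trans ?_
    rw [← Real.exp_sum]
    apply le_of_eq
    congr 1
    rw [Finset.sum_add_distrib, ← Finset.mul_sum, ← hESsum]
    congr 1
    rw [hC, Finset.mul_sum, Finset.sum_div]
  -- combine everything
  have hreal : (P {ω | t ≤ (∑ i, X i ω) - ES}).toReal ≤ Real.exp (-2 * t ^ 2 / C) := by
    refine hchern.trans ?_
    rw [hmgfsum]
    have h2 : Real.exp (-lam * t) * (Real.exp (-(lam * ES)) *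
          Real.exp (lam * ES + lam ^ 2 * C / 8))
        = Real.exp (-2 * t ^ 2 / C) := by
      rw [← Real.exp_add, ← Real.exp_add]
      congr 1
      rw [hlam]
      field_simp
      ring
    calc Real.exp (-lam * t) * (Real.exp (-(lam * ES)) * ∏ i, mgf (X i) P lam)
        ≤ Real.exp (-lam * t) * (Real.exp (-(lam * ES)) *
            Real.exp (lam * ES + lam ^ 2 * C / 8)) := by
          apply mul_le_mul_of_nonneg_left _ (Real.exp_pos _).le
          exact mul_le_mul_of_nonneg_left hprodbound (Real.exp_pos _).le
      _ = Real.exp (-2 * t ^ 2 / C) := h2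
  -- rewrite the goal's constant as C
  have hCeq : (∑ i,
      ((∫ ω, (X i ω) ^ 2 * Real.exp (4 * t * X i ω / D) ∂P) /
       (∫ ω, X i ω * Real.exp (4 * t * X i ω / D) ∂P)) ^ 2) = C := by
    rw [hC]
    exact Finset.sum_congr rfl fun i _ => by rw [hgI2 i, hgI1 i, ← hcdef i]
  rw [hCeq]
  have hne : P {ω | t ≤ (∑ i, X i ω) - ES} ≠ ⊤ := measure_ne_top _ _
  calc P {ω | t ≤ (∑ i, X i ω) - ES}
      = ENNReal.ofReal ((P {ω | t ≤ (∑ i, X i ω) - ES}).toReal) :=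
        (ENNReal.ofReal_toReal hne).symm
    _ ≤ ENNReal.ofReal (Real.exp (-2 * t ^ 2 / C)) := ENNReal.ofReal_le_ofReal hreal
end

section
/- Let b > 0 and let X_1, …, X_n be independent random variables with P(X_i ≤ b) = 1 and E|X_i|^3 < ∞. Set μ^2 := ∑_{i=1}^n E[X_i^2] and μ^3 := ∑_{i=1}^n E[max(X_i^3, 0)], and assume μ^2 > 0, μ^3 > 0 and b μ^2 ≠ μ^3. Let t > 0, α_0 := 1 + t b^2/μ^3, α_1 := b μ^2/μ^3 − 1, and let y be the unique positive solution of exp(x) = α_0 − α_1 x. Then t/b − (t/b + μ^2/b^2) y + ( μ^2/(2b^2) − μ^3/(2b^3) ) y^2 ≤ −(μ^2/b^2) · ( (bt/μ^2 + 1) · ln(bt/μ^2 + 1) − bt/μ^2 ); that is, the generalized Bennett bound using the first three moments is tighter than Bennett's bound. -/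
open Real Finset MeasureTheory

set_option maxHeartbeats 1000000 in
theorem statement16 {Ω : Type*} [MeasurableSpace Ω] (P : Measure Ω) [IsProbabilityMeasure P]
    (b : ℝ) (hb : 0 < b)
    (n : ℕ) (X : Fin n → Ω → ℝ)
    (hX : ∀ i, Measurable (X i))
    (hXb : ∀ i, P {ω | X i ω ≤ b} = 1)
    (hint : ∀ i, Integrable (fun ω => |X i ω| ^ 3) P)
    (μ2 μ3 : ℝ)
    (hμ2 : μ2 = ∑ i, ∫ ω, (X i ω) ^ 2 ∂P)
    (hμ3 : μ3 = ∑ i, ∫ ω, max ((X i ω) ^ 3) 0 ∂P)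
    (hμ2pos : 0 < μ2) (hμ3pos : 0 < μ3) (hne : b * μ2 ≠ μ3)
    (t : ℝ) (ht : 0 < t)
    (y : ℝ) (hy : 0 < y)
    (hysol : Real.exp y = (1 + t * b ^ 2 / μ3) - (b * μ2 / μ3 - 1) * y) :
    t / b - (t / b + μ2 / b ^ 2) * y + (μ2 / (2 * b ^ 2) - μ3 / (2 * b ^ 3)) * y ^ 2 ≤
      -(μ2 / b ^ 2) *
        ((b * t / μ2 + 1) * Real.log (b * t / μ2 + 1) - b * t / μ2) := by
  have hb0 : b ≠ 0 := hb.ne'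
  -- Step 1 : μ3 ≤ b * μ2
  have hμ3le : μ3 ≤ b * μ2 := by
    rw [hμ2, hμ3, Finset.mul_sum]
    refine Finset.sum_le_sum fun i _ => ?_
    have hmax_int : Integrable (fun ω => max ((X i ω) ^ 3) 0) P := by
      refine (hint i).mono
        ((((hX i).pow_const 3).max measurable_const).aestronglyMeasurable)
        (Filter.Eventually.of_forall fun ω => ?_)
      simp only [Real.norm_eq_abs]
      rw [abs_of_nonneg (le_max_right _ _), abs_of_nonneg (by positivity : (0:ℝ) ≤ |X i ω| ^ 3),
        ← abs_pow]
      exact max_le (le_abs_self _) (abs_nonneg _)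
    have hsq_int : Integrable (fun ω => (X i ω) ^ 2) P := by
      refine ((integrable_const (1:ℝ)).add (hint i)).mono
        (((hX i).pow_const 2).aestronglyMeasurable)
        (Filter.Eventually.of_forall fun ω => ?_)
      simp only [Real.norm_eq_abs]
      rw [abs_of_nonneg (sq_nonneg _)]
      have h1 : (X i ω) ^ 2 ≤ 1 + |X i ω| ^ 3 := by
        rcases le_or_gt (|X i ω|) 1 with h | h
        · nlinarith [abs_nonneg (X i ω), sq_abs (X i ω)]
        · nlinarith [abs_nonneg (X i ω), sq_abs (X i ω)]
      exact h1.trans (le_abs_self _)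
    have hae : ∀ᵐ ω ∂P, X i ω ≤ b := by
      have hms : MeasurableSet {ω | X i ω ≤ b} := measurableSet_le (hX i) measurable_const
      rw [ae_iff]
      have hcompl : {ω | ¬ X i ω ≤ b} = {ω | X i ω ≤ b}ᶜ := rfl
      rw [hcompl, measure_compl hms (measure_ne_top _ _), hXb i, measure_univ]
      simp
    calc ∫ ω, max ((X i ω) ^ 3) 0 ∂P ≤ ∫ ω, b * (X i ω) ^ 2 ∂P := by
          refine integral_mono_ae hmax_int (hsq_int.const_mul b) ?_
          filter_upwards [hae] with ω hω
          rcases le_or_gt 0 (X i ω) with h | h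
          · rw [max_eq_left (by positivity)]
            nlinarith [sq_nonneg (X i ω)]
          · rw [max_eq_right (by nlinarith [mul_nonpos_of_nonneg_of_nonpos (sq_nonneg (X i ω)) h.le])]
            positivity
      _ = b * ∫ ω, (X i ω) ^ 2 ∂P := integral_const_mul b _
  have hlt : μ3 < b * μ2 := hμ3le.lt_of_ne fun h => hne h.symm
  -- Step 2 : analytic part
  set y0 := Real.log (b * t / μ2 + 1) with hy0def
  have hs : 0 < b * t / μ2 := by positivity
  have hy0 : 0 < y0 := Real.log_pos (by linarith)
  have hE0 : Real.exp y0 = b * t / μ2 + 1 := Real.exp_log (by linarith)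
  have hμ2E0 : μ2 * Real.exp y0 = b * t + μ2 := by
    rw [hE0]; field_simp
  have hc : μ3 * Real.exp y = μ3 + t * b ^ 2 - (b * μ2 - μ3) * y := by
    rw [hysol]; field_simp
  have hquad : 1 + y0 + y0 ^ 2 / 2 ≤ Real.exp y0 := by
    have h := Real.sum_le_exp_of_nonneg hy0.le 3
    rw [Finset.sum_range_succ, Finset.sum_range_succ, Finset.sum_range_succ,
      Finset.sum_range_zero] at h
    norm_num [Nat.factorial] at h
    linarith
  have hDge : 1 + (y0 - y) ≤ Real.exp (y0 - y) := by
    linarith [Real.add_one_le_exp (y0 - y)]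
  have hED : Real.exp y0 = Real.exp y * Real.exp (y0 - y) := by
    rw [← Real.exp_add]; ring_nf
  have h2 : (μ3 * Real.exp y) * (1 + (y0 - y)) ≤ μ3 * Real.exp y0 := by
    rw [hED, ← mul_assoc]
    exact mul_le_mul_of_nonneg_left hDge (by positivity)
  have h2' : 0 ≤ μ3 * Real.exp y0 - (μ3 + t * b ^ 2 - (b * μ2 - μ3) * y) * (1 + (y0 - y)) := by
    rw [← hc]; linarith
  have h3 : 0 ≤ (b * μ2 - μ3) * (Real.exp y0 - 1 - y0 - y0 ^ 2 / 2) :=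
    mul_nonneg (by linarith) (by linarith)
  have h1 : 0 ≤ (b * μ2 - μ3) * (y0 - y) ^ 2 :=
    mul_nonneg (by linarith) (sq_nonneg _)
  have hb3 : (0:ℝ) < b ^ 3 := by positivity
  rw [← mul_le_mul_iff_right₀ hb3]
  have e1 : b ^ 3 * (t / b - (t / b + μ2 / b ^ 2) * y + (μ2 / (2 * b ^ 2) - μ3 / (2 * b ^ 3)) * y ^ 2)
      = t * b ^ 2 - (t * b ^ 2 + μ2 * b) * y + (μ2 * b - μ3) / 2 * y ^ 2 := by
    field_simp
  have e2 : b ^ 3 * (-(μ2 / b ^ 2) * ((b * t / μ2 + 1) * y0 - b * t / μ2))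
      = t * b ^ 2 - (t * b ^ 2 + μ2 * b) * y0 := by
    field_simp; ring
  rw [e1, e2]
  nlinarith [h1, h2', h3, hμ2E0, mul_le_mul_of_nonneg_left hμ2E0.le hb.le]
end

section
/- Let p be a positive integer. Then the function g(x) := T_{p+1}(x)/x^p is increasing on (0, ∞); that is, for all 0 < x ≤ y one has T_{p+1}(x)/x^p ≤ T_{p+1}(y)/y^p. -/
open Real Finset

lemma summable_shift (p : ℕ) (x : ℝ) :
    Summable (fun n : ℕ => x ^ (n + p) / ((n + p).factorial : ℝ)) :=
  (summable_nat_add_iff p).2 (Real.summable_pow_div_factorial x)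

lemma T_eq_tsum (p : ℕ) (x : ℝ) :
    T (p + 1) x = ∑' n : ℕ, x ^ (n + p) / ((n + p).factorial : ℝ) := by
  have h := Summable.sum_add_tsum_nat_add p (Real.summable_pow_div_factorial x)
  simp only [T, Real.exp_eq_exp_ℝ, NormedSpace.exp_eq_tsum_div, Nat.add_sub_cancel]
  linarith [h]

lemma g_eq (p : ℕ) (x : ℝ) (hx : 0 < x) :
    T (p + 1) x / x ^ p = ∑' n : ℕ, x ^ n / ((n + p).factorial : ℝ) := by
  rw [T_eq_tsum, ← tsum_div_const]
  congr 1
  ext n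
  rw [pow_add]
  field_simp

theorem statement18 (p : ℕ) (hp : 1 ≤ p) :
    ∀ x y : ℝ, 0 < x → x ≤ y → T (p + 1) x / x ^ p ≤ T (p + 1) y / y ^ p := by
  intro x y hx hxy
  rw [g_eq p x hx, g_eq p y (hx.trans_le hxy)]
  have hsx : Summable (fun n : ℕ => x ^ n / ((n + p).factorial : ℝ)) := by
    have := (summable_shift p x).div_const (x ^ p)
    refine this.congr fun n => ?_
    rw [pow_add]
    field_simp
  have hsy : Summable (fun n : ℕ => y ^ n / ((n + p).factorial : ℝ)) := by
    have hy : y ≠ 0 := (hx.trans_le hxy).ne'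
    have := (summable_shift p y).div_const (y ^ p)
    refine this.congr fun n => ?_
    rw [pow_add]
    field_simp
  exact Summable.tsum_le_tsum (fun n => by
    apply div_le_div_of_nonneg_right (pow_le_pow_left₀ hx.le hxy n)
    positivity) hsx hsy
end

section
/- Let p ≥ 1 be an integer, b > 0, and let X be a random variable with P(X ∈ [0, b]) = 1 and P(X > 0) > 0. Set μ^k := E[X^k] for k = 1, …, p. Then for every s ≥ 0: E[exp(s(X − E[X]))] ≤ exp( s^2 b^2 · C_p(sb, b, μ^1, …, μ^p) / 8 ). -/
open Real Finset MeasureTheory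

section Aux19

variable {Ω : Type*} [MeasurableSpace Ω] {P : Measure Ω} [IsProbabilityMeasure P]
  {X : Ω → ℝ} {b : ℝ}

lemma int_pow_exp (hX : Measurable X) (hb : 0 < b) (hae : ∀ᵐ ω ∂P, X ω ∈ Set.Icc 0 b)
    (k : ℕ) (t : ℝ) :
    Integrable (fun ω => X ω ^ k * Real.exp (t * X ω)) P := by
  apply Integrable.mono' (integrable_const (b ^ k * Real.exp (|t| * b)))
  · exact ((hX.pow_const k).mul ((measurable_const.mul hX).exp)).aestronglyMeasurable
  · filter_upwards [hae] with ω hω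
    obtain ⟨h0, h1⟩ := hω
    have he : Real.exp (t * X ω) ≤ Real.exp (|t| * b) := by
      apply Real.exp_le_exp.2
      calc t * X ω ≤ |t * X ω| := le_abs_self _
        _ = |t| * |X ω| := abs_mul _ _
        _ ≤ |t| * b := by
            apply mul_le_mul_of_nonneg_left _ (abs_nonneg t)
            rwa [abs_of_nonneg h0]
    have hx : X ω ^ k ≤ b ^ k := pow_le_pow_left₀ h0 h1 k
    have : ‖X ω ^ k * Real.exp (t * X ω)‖ = X ω ^ k * Real.exp (t * X ω) := by
      rw [Real.norm_eq_abs, abs_of_nonneg (mul_nonneg (pow_nonneg h0 _) (Real.exp_pos _).le)]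
    rw [this]
    exact mul_le_mul hx he (Real.exp_pos _).le (pow_nonneg hb.le _)

lemma int_pow (hX : Measurable X) (hb : 0 < b) (hae : ∀ᵐ ω ∂P, X ω ∈ Set.Icc 0 b)
    (k : ℕ) : Integrable (fun ω => X ω ^ k) P := by
  have := int_pow_exp hX hb hae k 0
  simpa using this

lemma mu_nonneg (hae : ∀ᵐ ω ∂P, X ω ∈ Set.Icc 0 b) (k : ℕ) :
    0 ≤ ∫ ω, X ω ^ k ∂P := by
  apply integral_nonneg_of_ae
  filter_upwards [hae] with ω hω using pow_nonneg hω.1 k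

/-- μ_{n+m} ≤ b^n μ_m -/
lemma mu_mono (hX : Measurable X) (hb : 0 < b) (hae : ∀ᵐ ω ∂P, X ω ∈ Set.Icc 0 b)
    (n m : ℕ) : ∫ ω, X ω ^ (n + m) ∂P ≤ b ^ n * ∫ ω, X ω ^ m ∂P := by
  have : b ^ n * ∫ ω, X ω ^ m ∂P = ∫ ω, b ^ n * X ω ^ m ∂P := by
    rw [integral_const_mul]
  rw [this]
  apply integral_mono_ae (int_pow hX hb hae _) ((int_pow hX hb hae m).const_mul _)
  filter_upwards [hae] with ω hω
  calc X ω ^ (n + m) = X ω ^ n * X ω ^ m := pow_add _ _ _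
    _ ≤ b ^ n * X ω ^ m :=
      mul_le_mul_of_nonneg_right (pow_le_pow_left₀ hω.1 hω.2 n) (pow_nonneg hω.1 m)

lemma mu_le_pow (hX : Measurable X) (hb : 0 < b) (hae : ∀ᵐ ω ∂P, X ω ∈ Set.Icc 0 b)
    (m : ℕ) : ∫ ω, X ω ^ m ∂P ≤ b ^ m := by
  have h := mu_mono hX hb hae m 0
  simpa using h

lemma exp_tsum (y : ℝ) : Real.exp y = ∑' n : ℕ, y ^ n / n.factorial := by
  rw [Real.exp_eq_exp_ℝ, NormedSpace.exp_eq_tsum_div]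

lemma summable_mu (hX : Measurable X) (hb : 0 < b) (hae : ∀ᵐ ω ∂P, X ω ∈ Set.Icc 0 b)
    (k : ℕ) (t : ℝ) :
    Summable (fun j : ℕ => t ^ j / j.factorial * ∫ ω, X ω ^ (j + k) ∂P) := by
  apply Summable.of_norm_bounded (g := fun j : ℕ => b ^ k * ((|t| * b) ^ j / j.factorial))
    ((Real.summable_pow_div_factorial (|t| * b)).mul_left _)
  intro j
  have h1 : |∫ ω, X ω ^ (j + k) ∂P| ≤ b ^ (j + k) := by
    rw [abs_of_nonneg (mu_nonneg hae _)]
    exact mu_le_pow hX hb hae _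
  have : ‖t ^ j / j.factorial * ∫ ω, X ω ^ (j + k) ∂P‖
      = |t| ^ j / j.factorial * |∫ ω, X ω ^ (j + k) ∂P| := by
    rw [Real.norm_eq_abs, abs_mul, abs_div, abs_pow, Nat.abs_cast]
  rw [this]
  calc |t| ^ j / j.factorial * |∫ ω, X ω ^ (j + k) ∂P|
      ≤ |t| ^ j / j.factorial * b ^ (j + k) := by
        apply mul_le_mul_of_nonneg_left h1 (by positivity)
    _ = b ^ k * ((|t| * b) ^ j / j.factorial) := by
        rw [mul_pow, pow_add]; ring

lemma expansion (hX : Measurable X) (hb : 0 < b) (hae : ∀ᵐ ω ∂P, X ω ∈ Set.Icc 0 b)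
    (k : ℕ) (t : ℝ) :
    ∫ ω, X ω ^ k * Real.exp (t * X ω) ∂P
      = ∑' j : ℕ, t ^ j / j.factorial * ∫ ω, X ω ^ (j + k) ∂P := by
  have hpt : ∀ x : ℝ, x ^ k * Real.exp (t * x)
      = ∑' j : ℕ, t ^ j / j.factorial * x ^ (j + k) := by
    intro x
    have : (fun j : ℕ => t ^ j / j.factorial * x ^ (j + k))
        = fun j : ℕ => ((t * x) ^ j / j.factorial) * x ^ k := by
      funext j; rw [mul_pow, pow_add]; ring
    rw [this, tsum_mul_right, ← exp_tsum, mul_comm]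
  have hmeas : ∀ j : ℕ, AEStronglyMeasurable
      (fun ω => t ^ j / (j.factorial : ℝ) * X ω ^ (j + k)) P :=
    fun j => ((hX.pow_const _).const_mul _).aestronglyMeasurable
  have hlin : ∑' j : ℕ, ∫⁻ ω, ‖t ^ j / (j.factorial : ℝ) * X ω ^ (j + k)‖₊ ∂P ≠ ⊤ := by
    have hb1 : ∀ j : ℕ, ∫⁻ ω, ‖t ^ j / (j.factorial : ℝ) * X ω ^ (j + k)‖₊ ∂P
        ≤ ENNReal.ofReal (b ^ k * ((|t| * b) ^ j / j.factorial)) := by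
      intro j
      have : ∀ᵐ ω ∂P, (‖t ^ j / (j.factorial : ℝ) * X ω ^ (j + k)‖₊ : ENNReal)
          ≤ ENNReal.ofReal (b ^ k * ((|t| * b) ^ j / j.factorial)) := by
        filter_upwards [hae] with ω hω
        rw [← ENNReal.ofReal_coe_nnreal, coe_nnnorm]
        apply ENNReal.ofReal_le_ofReal
        have : ‖t ^ j / (j.factorial : ℝ) * X ω ^ (j + k)‖
            = |t| ^ j / j.factorial * X ω ^ (j + k) := by
          rw [Real.norm_eq_abs, abs_mul, abs_div, abs_pow, Nat.abs_cast,
            abs_of_nonneg (pow_nonneg hω.1 _)]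
        rw [this]
        calc |t| ^ j / j.factorial * X ω ^ (j + k)
            ≤ |t| ^ j / j.factorial * b ^ (j + k) := by
              apply mul_le_mul_of_nonneg_left (pow_le_pow_left₀ hω.1 hω.2 _) (by positivity)
          _ = b ^ k * ((|t| * b) ^ j / j.factorial) := by rw [mul_pow, pow_add]; ring
      calc ∫⁻ ω, ‖t ^ j / (j.factorial : ℝ) * X ω ^ (j + k)‖₊ ∂P
          ≤ ∫⁻ _, ENNReal.ofReal (b ^ k * ((|t| * b) ^ j / j.factorial)) ∂P :=
            lintegral_mono_ae this
        _ = ENNReal.ofReal (b ^ k * ((|t| * b) ^ j / j.factorial)) := by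
            simp [lintegral_const, measure_univ]
    have hsum : Summable (fun j : ℕ => b ^ k * ((|t| * b) ^ j / j.factorial)) :=
      (Real.summable_pow_div_factorial (|t| * b)).mul_left _
    have hnn : ∀ j : ℕ, 0 ≤ b ^ k * ((|t| * b) ^ j / j.factorial) := by
      intro j; positivity
    have hle : ∑' j : ℕ, ∫⁻ ω, ‖t ^ j / (j.factorial : ℝ) * X ω ^ (j + k)‖₊ ∂P
        ≤ ENNReal.ofReal (∑' j : ℕ, b ^ k * ((|t| * b) ^ j / j.factorial)) := by
      rw [ENNReal.ofReal_tsum_of_nonneg hnn hsum]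
      exact ENNReal.tsum_le_tsum hb1
    exact (lt_of_le_of_lt hle ENNReal.ofReal_lt_top).ne
  calc ∫ ω, X ω ^ k * Real.exp (t * X ω) ∂P
      = ∫ ω, ∑' j : ℕ, t ^ j / (j.factorial : ℝ) * X ω ^ (j + k) ∂P := by
        apply integral_congr_ae
        filter_upwards with ω using hpt (X ω)
    _ = ∑' j : ℕ, ∫ ω, t ^ j / (j.factorial : ℝ) * X ω ^ (j + k) ∂P :=
        integral_tsum hmeas hlin
    _ = ∑' j : ℕ, t ^ j / (j.factorial : ℝ) * ∫ ω, X ω ^ (j + k) ∂P := by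
        congr 1; funext j; exact integral_const_mul _ _

/-- Splitting the denominator of `Cp`. -/
lemma denom_split (m : ℕ → ℝ) (q : ℕ) (s b : ℝ) (E1 : ℝ)
    (hE1 : E1 = ∑' j : ℕ, s ^ j / j.factorial * m (j + 1))
    (hsum1 : Summable (fun j : ℕ => s ^ j / j.factorial * m (j + 1))) :
    m (q + 1) * Real.exp (s * b)
      + ∑ j ∈ range q, (s * b) ^ j / j.factorial * (b ^ (q - j) * m (j + 1) - m (q + 1))
    = b ^ q * E1
      + ∑' n : ℕ, s ^ (n + q) / (n + q).factorial
          * (b ^ (n + q) * m (q + 1) - b ^ q * m (n + q + 1)) := by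
  have hexpsum : Summable (fun j : ℕ => (s * b) ^ j / j.factorial) :=
    Real.summable_pow_div_factorial (s * b)
  have hexp : Real.exp (s * b)
      = ∑ j ∈ range q, (s * b) ^ j / j.factorial + ∑' n : ℕ, (s * b) ^ (n + q) / (n + q).factorial := by
    rw [exp_tsum]; exact (Summable.sum_add_tsum_nat_add q hexpsum).symm
  have hS1 : Summable (fun n : ℕ => s ^ (n + q) / (n + q).factorial * m (n + q + 1)) := by
    have := (summable_nat_add_iff q).2 hsum1
    simpa using this
  have hS2 : Summable (fun n : ℕ => s ^ (n + q) / (n + q).factorial * (b ^ (n + q) * m (q + 1))) := by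
    have : (fun n : ℕ => s ^ (n + q) / (n + q).factorial * (b ^ (n + q) * m (q + 1)))
        = fun n : ℕ => m (q + 1) * ((s * b) ^ (n + q) / (n + q).factorial) := by
      funext n; rw [mul_pow]; ring
    rw [this]
    exact ((summable_nat_add_iff q).2 hexpsum).mul_left _
  have hE1' : b ^ q * E1
      = ∑ j ∈ range q, b ^ q * (s ^ j / j.factorial * m (j + 1))
        + ∑' n : ℕ, b ^ q * (s ^ (n + q) / (n + q).factorial * m (n + q + 1)) := by
    rw [hE1, ← tsum_mul_left, ← Summable.sum_add_tsum_nat_add q (hsum1.mul_left (b ^ q))]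
  have hS2' : Summable (fun n : ℕ => m (q + 1) * ((s * b) ^ (n + q) / (n + q).factorial)) :=
    ((summable_nat_add_iff q).2 hexpsum).mul_left _
  have htsum : ∑' n : ℕ, s ^ (n + q) / (n + q).factorial
      * (b ^ (n + q) * m (q + 1) - b ^ q * m (n + q + 1))
      = m (q + 1) * ∑' n : ℕ, (s * b) ^ (n + q) / (n + q).factorial
        - ∑' n : ℕ, b ^ q * (s ^ (n + q) / (n + q).factorial * m (n + q + 1)) := by
    calc ∑' n : ℕ, s ^ (n + q) / (n + q).factorial
        * (b ^ (n + q) * m (q + 1) - b ^ q * m (n + q + 1))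
        = ∑' n : ℕ, (m (q + 1) * ((s * b) ^ (n + q) / (n + q).factorial)
            - b ^ q * (s ^ (n + q) / (n + q).factorial * m (n + q + 1))) := by
          congr 1; funext n; rw [mul_pow]; ring
      _ = ∑' n : ℕ, m (q + 1) * ((s * b) ^ (n + q) / (n + q).factorial)
            - ∑' n : ℕ, b ^ q * (s ^ (n + q) / (n + q).factorial * m (n + q + 1)) :=
          Summable.tsum_sub hS2' (hS1.mul_left _)
      _ = m (q + 1) * ∑' n : ℕ, (s * b) ^ (n + q) / (n + q).factorial
            - ∑' n : ℕ, b ^ q * (s ^ (n + q) / (n + q).factorial * m (n + q + 1)) := by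
          rw [tsum_mul_left]
  have hfin : m (q + 1) * ∑ j ∈ range q, (s * b) ^ j / j.factorial
      + ∑ j ∈ range q, (s * b) ^ j / j.factorial * (b ^ (q - j) * m (j + 1) - m (q + 1))
      = ∑ j ∈ range q, b ^ q * (s ^ j / j.factorial * m (j + 1)) := by
    rw [mul_sum, ← sum_add_distrib]
    apply sum_congr rfl
    intro j hj
    have hjq : j ≤ q := (mem_range.1 hj).le
    have hbq : (b : ℝ) ^ j * b ^ (q - j) = b ^ q := pow_mul_pow_sub b hjq
    rw [mul_pow]
    linear_combination (s ^ j / j.factorial * m (j + 1)) * hbq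
  calc m (q + 1) * Real.exp (s * b)
      + ∑ j ∈ range q, (s * b) ^ j / j.factorial * (b ^ (q - j) * m (j + 1) - m (q + 1))
      = (m (q + 1) * ∑ j ∈ range q, (s * b) ^ j / j.factorial
          + ∑ j ∈ range q, (s * b) ^ j / j.factorial * (b ^ (q - j) * m (j + 1) - m (q + 1)))
        + m (q + 1) * ∑' n : ℕ, (s * b) ^ (n + q) / (n + q).factorial := by
        rw [hexp]; ring
    _ = ∑ j ∈ range q, b ^ q * (s ^ j / j.factorial * m (j + 1))
        + m (q + 1) * ∑' n : ℕ, (s * b) ^ (n + q) / (n + q).factorial := by rw [hfin]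
    _ = b ^ q * E1
      + ∑' n : ℕ, s ^ (n + q) / (n + q).factorial
          * (b ^ (n + q) * m (q + 1) - b ^ q * m (n + q + 1)) := by
        rw [htsum, hE1']; ring
/-- Splitting the numerator of `Cp` (multiplied by `b`). -/
lemma numer_split (m : ℕ → ℝ) (q : ℕ) (s b : ℝ) (E2 : ℝ)
    (hE2 : E2 = ∑' j : ℕ, s ^ j / j.factorial * m (j + 2))
    (hsum2 : Summable (fun j : ℕ => s ^ j / j.factorial * m (j + 2))) :
    b * (m (q + 1) * Real.exp (s * b)
      + ∑ j ∈ range (q - 1), (s * b) ^ j / j.factorial * (b ^ (q - j - 1) * m (j + 2) - m (q + 1)))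
    = b ^ q * E2
      + ∑' n : ℕ, s ^ (n + q) / (n + q).factorial
          * (b ^ (n + q + 1) * m (q + 1) - b ^ q * m (n + q + 2)) := by
  have hexpsum : Summable (fun j : ℕ => (s * b) ^ j / j.factorial) :=
    Real.summable_pow_div_factorial (s * b)
  have hexp : Real.exp (s * b)
      = ∑ j ∈ range q, (s * b) ^ j / j.factorial + ∑' n : ℕ, (s * b) ^ (n + q) / (n + q).factorial := by
    rw [exp_tsum]; exact (Summable.sum_add_tsum_nat_add q hexpsum).symm
  have hS1 : Summable (fun n : ℕ => s ^ (n + q) / (n + q).factorial * m (n + q + 2)) := by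
    have := (summable_nat_add_iff q).2 hsum2
    simpa using this
  have hS2' : Summable (fun n : ℕ => (m (q + 1) * b) * ((s * b) ^ (n + q) / (n + q).factorial)) :=
    ((summable_nat_add_iff q).2 hexpsum).mul_left _
  have hE2' : b ^ q * E2
      = ∑ j ∈ range q, b ^ q * (s ^ j / j.factorial * m (j + 2))
        + ∑' n : ℕ, b ^ q * (s ^ (n + q) / (n + q).factorial * m (n + q + 2)) := by
    rw [hE2, ← tsum_mul_left, ← Summable.sum_add_tsum_nat_add q (hsum2.mul_left (b ^ q))]
  have htsum : ∑' n : ℕ, s ^ (n + q) / (n + q).factorial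
      * (b ^ (n + q + 1) * m (q + 1) - b ^ q * m (n + q + 2))
      = (m (q + 1) * b) * ∑' n : ℕ, (s * b) ^ (n + q) / (n + q).factorial
        - ∑' n : ℕ, b ^ q * (s ^ (n + q) / (n + q).factorial * m (n + q + 2)) := by
    calc ∑' n : ℕ, s ^ (n + q) / (n + q).factorial
        * (b ^ (n + q + 1) * m (q + 1) - b ^ q * m (n + q + 2))
        = ∑' n : ℕ, ((m (q + 1) * b) * ((s * b) ^ (n + q) / (n + q).factorial)
            - b ^ q * (s ^ (n + q) / (n + q).factorial * m (n + q + 2))) := by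
          congr 1; funext n; rw [mul_pow, pow_succ]; ring
      _ = ∑' n : ℕ, (m (q + 1) * b) * ((s * b) ^ (n + q) / (n + q).factorial)
            - ∑' n : ℕ, b ^ q * (s ^ (n + q) / (n + q).factorial * m (n + q + 2)) :=
          Summable.tsum_sub hS2' (hS1.mul_left _)
      _ = (m (q + 1) * b) * ∑' n : ℕ, (s * b) ^ (n + q) / (n + q).factorial
            - ∑' n : ℕ, b ^ q * (s ^ (n + q) / (n + q).factorial * m (n + q + 2)) := by
          rw [tsum_mul_left]
  have hfin : b * (m (q + 1) * ∑ j ∈ range q, (s * b) ^ j / j.factorial)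
      + b * ∑ j ∈ range (q - 1), (s * b) ^ j / j.factorial * (b ^ (q - j - 1) * m (j + 2) - m (q + 1))
      = ∑ j ∈ range q, b ^ q * (s ^ j / j.factorial * m (j + 2)) := by
    rcases q with _ | r
    · simp
    · have hr : r + 1 - 1 = r := rfl
      rw [hr, Finset.sum_range_succ, Finset.sum_range_succ]
      have hlast : b * (m (r + 2) * ((s * b) ^ r / r.factorial))
          = b ^ (r + 1) * (s ^ r / r.factorial * m (r + 2)) := by
        rw [mul_pow, pow_succ]; ring
      have hmain : ∀ j ∈ range r,
          b * (m (r + 2) * ((s * b) ^ j / j.factorial))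
            + b * ((s * b) ^ j / j.factorial * (b ^ (r + 1 - j - 1) * m (j + 2) - m (r + 2)))
          = b ^ (r + 1) * (s ^ j / j.factorial * m (j + 2)) := by
        intro j hj
        have hjr : j ≤ r := (mem_range.1 hj).le
        have hq : r + 1 - j - 1 = r - j := by omega
        have hbq : (b : ℝ) ^ j * b ^ (r - j) = b ^ r := pow_mul_pow_sub b hjr
        rw [hq, mul_pow, pow_succ]
        linear_combination (b * s ^ j / j.factorial * m (j + 2)) * hbq
      calc b * (m (r + 1 + 1) * (∑ j ∈ range r, (s * b) ^ j / j.factorial + (s * b) ^ r / r.factorial))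
          + b * ∑ j ∈ range r, (s * b) ^ j / j.factorial * (b ^ (r + 1 - j - 1) * m (j + 2) - m (r + 1 + 1))
          = (∑ j ∈ range r, (b * (m (r + 2) * ((s * b) ^ j / j.factorial))
              + b * ((s * b) ^ j / j.factorial * (b ^ (r + 1 - j - 1) * m (j + 2) - m (r + 2)))))
            + b * (m (r + 2) * ((s * b) ^ r / r.factorial)) := by
            rw [sum_add_distrib, ← Finset.mul_sum, ← Finset.mul_sum, ← Finset.mul_sum]; ring
        _ = (∑ j ∈ range r, b ^ (r + 1) * (s ^ j / j.factorial * m (j + 2)))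
            + b ^ (r + 1) * (s ^ r / r.factorial * m (r + 2)) := by
            rw [sum_congr rfl hmain, hlast]
  calc b * (m (q + 1) * Real.exp (s * b)
      + ∑ j ∈ range (q - 1), (s * b) ^ j / j.factorial * (b ^ (q - j - 1) * m (j + 2) - m (q + 1)))
      = (b * (m (q + 1) * ∑ j ∈ range q, (s * b) ^ j / j.factorial)
          + b * ∑ j ∈ range (q - 1), (s * b) ^ j / j.factorial * (b ^ (q - j - 1) * m (j + 2) - m (q + 1)))
        + (m (q + 1) * b) * ∑' n : ℕ, (s * b) ^ (n + q) / (n + q).factorial := by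
        rw [hexp]; ring
    _ = ∑ j ∈ range q, b ^ q * (s ^ j / j.factorial * m (j + 2))
        + (m (q + 1) * b) * ∑' n : ℕ, (s * b) ^ (n + q) / (n + q).factorial := by rw [hfin]
    _ = b ^ q * E2
      + ∑' n : ℕ, s ^ (n + q) / (n + q).factorial
          * (b ^ (n + q + 1) * m (q + 1) - b ^ q * m (n + q + 2)) := by
        rw [htsum, hE2']; ring
/-- Chebyshev-type correlation inequality:
`E[X²e^{tX}]·E[Xe^{sX}] ≤ E[Xe^{tX}]·E[X²e^{sX}]` for `t ≤ s`. -/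
lemma cheb (hX : Measurable X) (hb : 0 < b) (hae : ∀ᵐ ω ∂P, X ω ∈ Set.Icc 0 b)
    {t s : ℝ} (hts : t ≤ s) :
    (∫ ω, X ω ^ 2 * Real.exp (t * X ω) ∂P) * ∫ ω, X ω ^ 1 * Real.exp (s * X ω) ∂P
      ≤ (∫ ω, X ω ^ 1 * Real.exp (t * X ω) ∂P) * ∫ ω, X ω ^ 2 * Real.exp (s * X ω) ∂P := by
  have h1 : ∀ᵐ z ∂(P.prod P), X z.1 ∈ Set.Icc 0 b :=
    (MeasureTheory.Measure.quasiMeasurePreserving_fst).ae hae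
  have h2 : ∀ᵐ z ∂(P.prod P), X z.2 ∈ Set.Icc 0 b :=
    (MeasureTheory.Measure.quasiMeasurePreserving_snd).ae hae
  set F : Ω × Ω → ℝ := fun z =>
    (X z.1 ^ 2 * Real.exp (t * X z.1)) * (X z.2 ^ 1 * Real.exp (s * X z.2))
    - (X z.1 ^ 2 * Real.exp (s * X z.1)) * (X z.2 ^ 1 * Real.exp (t * X z.2))
    - (X z.1 ^ 1 * Real.exp (t * X z.1)) * (X z.2 ^ 2 * Real.exp (s * X z.2))
    + (X z.1 ^ 1 * Real.exp (s * X z.1)) * (X z.2 ^ 2 * Real.exp (t * X z.2)) with hF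
  have hFnonpos : ∀ᵐ z ∂(P.prod P), F z ≤ 0 := by
    filter_upwards [h1, h2] with z hz1 hz2
    set x := X z.1
    set y := X z.2
    have hfac : F z = (x * y) * ((x - y) *
        (Real.exp (t * x) * Real.exp (s * y) - Real.exp (s * x) * Real.exp (t * y))) := by
      simp only [hF, pow_one, pow_two]; ring
    rw [hfac]
    apply mul_nonpos_iff.2
    left
    refine ⟨mul_nonneg hz1.1 hz2.1, ?_⟩
    rcases le_total x y with hxy | hxy
    · apply mul_nonpos_iff.2
      right
      refine ⟨by linarith, ?_⟩
      rw [sub_nonneg, ← Real.exp_add, ← Real.exp_add]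
      apply Real.exp_le_exp.2
      nlinarith
    · apply mul_nonpos_iff.2
      left
      refine ⟨by linarith, ?_⟩
      rw [sub_nonpos, ← Real.exp_add, ← Real.exp_add]
      apply Real.exp_le_exp.2
      nlinarith
  have hIkt : ∀ (k : ℕ) (u : ℝ), Integrable (fun ω => X ω ^ k * Real.exp (u * X ω)) P :=
    fun k u => int_pow_exp hX hb hae k u
  have hprod : ∀ (k₁ k₂ : ℕ) (u₁ u₂ : ℝ), Integrable (fun z : Ω × Ω =>
      (X z.1 ^ k₁ * Real.exp (u₁ * X z.1)) * (X z.2 ^ k₂ * Real.exp (u₂ * X z.2))) (P.prod P) :=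
    fun k₁ k₂ u₁ u₂ => (hIkt k₁ u₁).mul_prod (hIkt k₂ u₂)
  have hA := integral_prod_mul (μ := P) (ν := P)
    (f := fun ω => X ω ^ 2 * Real.exp (t * X ω)) (g := fun ω => X ω ^ 1 * Real.exp (s * X ω))
  have hB := integral_prod_mul (μ := P) (ν := P)
    (f := fun ω => X ω ^ 2 * Real.exp (s * X ω)) (g := fun ω => X ω ^ 1 * Real.exp (t * X ω))
  have hC := integral_prod_mul (μ := P) (ν := P)
    (f := fun ω => X ω ^ 1 * Real.exp (t * X ω)) (g := fun ω => X ω ^ 2 * Real.exp (s * X ω))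
  have hD := integral_prod_mul (μ := P) (ν := P)
    (f := fun ω => X ω ^ 1 * Real.exp (s * X ω)) (g := fun ω => X ω ^ 2 * Real.exp (t * X ω))
  have hint : ∫ z, F z ∂(P.prod P) =
      (∫ ω, X ω ^ 2 * Real.exp (t * X ω) ∂P) * (∫ ω, X ω ^ 1 * Real.exp (s * X ω) ∂P)
      - (∫ ω, X ω ^ 2 * Real.exp (s * X ω) ∂P) * (∫ ω, X ω ^ 1 * Real.exp (t * X ω) ∂P)
      - (∫ ω, X ω ^ 1 * Real.exp (t * X ω) ∂P) * (∫ ω, X ω ^ 2 * Real.exp (s * X ω) ∂P)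
      + (∫ ω, X ω ^ 1 * Real.exp (s * X ω) ∂P) * (∫ ω, X ω ^ 2 * Real.exp (t * X ω) ∂P) := by
    have h12 : Integrable (fun z : Ω × Ω =>
        (X z.1 ^ 2 * Real.exp (t * X z.1)) * (X z.2 ^ 1 * Real.exp (s * X z.2))
        - (X z.1 ^ 2 * Real.exp (s * X z.1)) * (X z.2 ^ 1 * Real.exp (t * X z.2))) (P.prod P) :=
      (hprod 2 1 t s).sub (hprod 2 1 s t)
    have h123 : Integrable (fun z : Ω × Ω =>
        (X z.1 ^ 2 * Real.exp (t * X z.1)) * (X z.2 ^ 1 * Real.exp (s * X z.2))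
        - (X z.1 ^ 2 * Real.exp (s * X z.1)) * (X z.2 ^ 1 * Real.exp (t * X z.2))
        - (X z.1 ^ 1 * Real.exp (t * X z.1)) * (X z.2 ^ 2 * Real.exp (s * X z.2))) (P.prod P) :=
      h12.sub (hprod 1 2 t s)
    rw [← hA, ← hB, ← hC, ← hD,
      ← integral_sub (hprod 2 1 t s) (hprod 2 1 s t),
      ← integral_sub h12 (hprod 1 2 t s),
      ← integral_add h123 (hprod 1 2 s t)]
  have hle : ∫ z, F z ∂(P.prod P) ≤ 0 := integral_nonpos_of_ae hFnonpos
  rw [hint] at hle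
  linarith
lemma hasDeriv_pow_exp (hX : Measurable X) (hb : 0 < b) (hae : ∀ᵐ ω ∂P, X ω ∈ Set.Icc 0 b)
    (k : ℕ) (t : ℝ) :
    HasDerivAt (fun u => ∫ ω, X ω ^ k * Real.exp (u * X ω) ∂P)
      (∫ ω, X ω ^ (k + 1) * Real.exp (t * X ω) ∂P) t := by
  have key := hasDerivAt_integral_of_dominated_loc_of_deriv_le (μ := P) (x₀ := t)
    (F := fun u ω => X ω ^ k * Real.exp (u * X ω))
    (F' := fun u ω => X ω ^ (k + 1) * Real.exp (u * X ω))
    (bound := fun _ => b ^ (k + 1) * Real.exp ((|t| + 1) * b))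
    (Metric.ball_mem_nhds t one_pos)
    (Filter.Eventually.of_forall fun u =>
      ((hX.pow_const k).mul ((measurable_const.mul hX).exp)).aestronglyMeasurable)
    (int_pow_exp hX hb hae k t)
    ((hX.pow_const (k + 1)).mul ((measurable_const.mul hX).exp)).aestronglyMeasurable
    ?_ (integrable_const _) ?_
  · exact key.2
  · filter_upwards [hae] with ω hω
    intro u hu
    have hub : |u| ≤ |t| + 1 := by
      have := mem_ball_iff_norm.1 hu
      rw [Real.norm_eq_abs] at this
      have h2 := abs_sub_abs_le_abs_sub u t
      linarith
    have h1 : ‖X ω ^ (k + 1) * Real.exp (u * X ω)‖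
        = X ω ^ (k + 1) * Real.exp (u * X ω) := by
      rw [Real.norm_eq_abs, abs_of_nonneg (mul_nonneg (pow_nonneg hω.1 _) (Real.exp_pos _).le)]
    rw [h1]
    have he : Real.exp (u * X ω) ≤ Real.exp ((|t| + 1) * b) := by
      apply Real.exp_le_exp.2
      calc u * X ω ≤ |u * X ω| := le_abs_self _
        _ = |u| * |X ω| := abs_mul _ _
        _ ≤ (|t| + 1) * b := by
          apply mul_le_mul hub (by rw [abs_of_nonneg hω.1]; exact hω.2) (abs_nonneg _)
          positivity
    exact mul_le_mul (pow_le_pow_left₀ hω.1 hω.2 _) he (Real.exp_pos _).le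
      (pow_nonneg hb.le _)
  · filter_upwards with ω
    intro u _
    have h := (((hasDerivAt_id u).mul_const (X ω)).exp).const_mul (X ω ^ k)
    simp only [id_eq, one_mul] at h
    have h3 : X ω ^ k * (Real.exp (u * X ω) * X ω) = X ω ^ (k + 1) * Real.exp (u * X ω) := by
      rw [pow_succ]; ring
    exact h3 ▸ h
lemma int_exp_pos (hX : Measurable X) (hb : 0 < b) (hae : ∀ᵐ ω ∂P, X ω ∈ Set.Icc 0 b)
    (t : ℝ) : 0 < ∫ ω, X ω ^ 0 * Real.exp (t * X ω) ∂P := by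
  rw [integral_pos_iff_support_of_nonneg_ae]
  · have : Function.support (fun ω => X ω ^ 0 * Real.exp (t * X ω)) = Set.univ := by
      ext ω; simp [Real.exp_ne_zero]
    rw [this]
    simp
  · filter_upwards with ω
    positivity
  · exact int_pow_exp hX hb hae 0 t

lemma int_k_exp_pos (hX : Measurable X) (hb : 0 < b) (hae : ∀ᵐ ω ∂P, X ω ∈ Set.Icc 0 b)
    (hXpos : 0 < P {ω | 0 < X ω}) (k : ℕ) (t : ℝ) :
    0 < ∫ ω, X ω ^ k * Real.exp (t * X ω) ∂P := by
  have hnn : 0 ≤ᵐ[P] fun ω => X ω ^ k * Real.exp (t * X ω) := by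
    filter_upwards [hae] with ω hω
    have := hω.1
    positivity
  rw [integral_pos_iff_support_of_nonneg_ae hnn (int_pow_exp hX hb hae k t)]
  apply lt_of_lt_of_le hXpos
  apply measure_mono
  intro ω hω
  have hω' : 0 < X ω := hω
  simp only [Function.mem_support]
  positivity
lemma core (hX : Measurable X) (hb : 0 < b) (hae : ∀ᵐ ω ∂P, X ω ∈ Set.Icc 0 b)
    {s : ℝ} (hs : 0 ≤ s) (c : ℝ)
    (hmaster : ∀ t, t ≤ s →
      (∫ ω, X ω ^ 2 * Real.exp (t * X ω) ∂P) * (∫ ω, X ω ^ 0 * Real.exp (t * X ω) ∂P)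
        - (∫ ω, X ω ^ 1 * Real.exp (t * X ω) ∂P) ^ 2
      ≤ b ^ 2 * c / 4 * (∫ ω, X ω ^ 0 * Real.exp (t * X ω) ∂P) ^ 2) :
    (∫ ω, Real.exp (s * (X ω - ∫ ω', X ω' ∂P)) ∂P) ≤ Real.exp (s ^ 2 * b ^ 2 * c / 8) := by
  set μ1 : ℝ := ∫ ω', X ω' ∂P with hμ1
  set K : ℝ := b ^ 2 * c / 8 with hK
  set L : ℝ → ℝ := fun u => ∫ ω, X ω ^ 0 * Real.exp (u * X ω) ∂P with hL
  set E1 : ℝ → ℝ := fun u => ∫ ω, X ω ^ 1 * Real.exp (u * X ω) ∂P with hE1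
  set E2 : ℝ → ℝ := fun u => ∫ ω, X ω ^ 2 * Real.exp (u * X ω) ∂P with hE2
  have hLpos : ∀ t, 0 < L t := fun t => int_exp_pos hX hb hae t
  have hdL : ∀ t, HasDerivAt L (E1 t) t := fun t => hasDeriv_pow_exp hX hb hae 0 t
  have hdE1 : ∀ t, HasDerivAt E1 (E2 t) t := fun t => hasDeriv_pow_exp hX hb hae 1 t
  set g' : ℝ → ℝ := fun t => E1 t / L t - (μ1 + K * (2 * t)) with hg'
  set g : ℝ → ℝ := fun t => Real.log (L t) - (μ1 * t + K * t ^ 2) with hg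
  have hdg : ∀ t, HasDerivAt g (g' t) t := by
    intro t
    have h1 : HasDerivAt (fun u => Real.log (L u)) (E1 t / L t) t :=
      (hdL t).log (hLpos t).ne'
    have h2 : HasDerivAt (fun u : ℝ => μ1 * u + K * u ^ 2) (μ1 + K * (2 * t)) t := by
      have ha : HasDerivAt (fun u : ℝ => μ1 * u) (μ1 * 1) t := (hasDerivAt_id t).const_mul μ1
      have hbp : HasDerivAt (fun u : ℝ => u ^ 2) (2 * t ^ 1) t := by
        simpa using hasDerivAt_pow 2 t
      have hc := ha.add (hbp.const_mul K)
      have : μ1 * 1 + K * (2 * t ^ 1) = μ1 + K * (2 * t) := by ring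
      exact this ▸ hc
    exact h1.sub h2
  have hdg' : ∀ t, HasDerivAt g'
      ((E2 t * L t - E1 t * E1 t) / (L t) ^ 2 - K * 2) t := by
    intro t
    have h1 : HasDerivAt (fun u => E1 u / L u)
        ((E2 t * L t - E1 t * E1 t) / (L t) ^ 2) t := (hdE1 t).div (hdL t) (hLpos t).ne'
    have h2 : HasDerivAt (fun u : ℝ => μ1 + K * (2 * u)) (K * 2) t := by
      simpa using (((hasDerivAt_id t).const_mul (2 : ℝ)).const_mul K).const_add μ1
    exact h1.sub h2
  have hg'nonpos : ∀ t ∈ Set.Icc 0 s, g' t ≤ 0 := by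
    have hanti : AntitoneOn g' (Set.Icc 0 s) := by
      apply antitoneOn_of_deriv_nonpos (convex_Icc 0 s)
      · exact (Differentiable.continuous fun t => (hdg' t).differentiableAt).continuousOn
      · exact fun t _ => ((hdg' t).differentiableAt).differentiableWithinAt
      · intro t ht
        rw [(hdg' t).deriv]
        rw [interior_Icc] at ht
        have hts : t ≤ s := ht.2.le
        have hm := hmaster t hts
        have hL2 : 0 < (L t) ^ 2 := pow_pos (hLpos t) 2
        have hfrac : (E2 t * L t - E1 t * E1 t) / (L t) ^ 2 ≤ b ^ 2 * c / 4 := by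
          rw [div_le_iff₀ hL2]
          have he : E2 t * L t - E1 t * E1 t = E2 t * L t - E1 t ^ 2 := by ring
          rw [he]
          exact hm
        have hK2 : K * 2 = b ^ 2 * c / 4 := by rw [hK]; ring
        linarith
    intro t ht
    have h0 : (0 : ℝ) ∈ Set.Icc 0 s := Set.mem_Icc.2 ⟨le_refl _, hs⟩
    have := hanti h0 ht ht.1
    have hg'0 : g' 0 = 0 := by
      have hL0 : L 0 = 1 := by
        rw [hL]
        simp
      have hE10 : E1 0 = μ1 := by
        rw [hE1, hμ1]
        simp
      simp only [hg']
      rw [hL0, hE10]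
      simp
    linarith [hg'0 ▸ this]
  have hgs : g s ≤ 0 := by
    have hanti : AntitoneOn g (Set.Icc 0 s) := by
      apply antitoneOn_of_deriv_nonpos (convex_Icc 0 s)
      · exact (Differentiable.continuous fun t => (hdg t).differentiableAt).continuousOn
      · exact fun t _ => ((hdg t).differentiableAt).differentiableWithinAt
      · intro t ht
        rw [(hdg t).deriv]
        rw [interior_Icc] at ht
        exact hg'nonpos t ⟨ht.1.le, ht.2.le⟩
    have h0 : (0 : ℝ) ∈ Set.Icc 0 s := Set.mem_Icc.2 ⟨le_refl _, hs⟩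
    have hss : s ∈ Set.Icc 0 s := Set.mem_Icc.2 ⟨hs, le_refl _⟩
    have := hanti h0 hss hs
    have hg0 : g 0 = 0 := by
      have hL0 : L 0 = 1 := by rw [hL]; simp
      simp only [hg]
      rw [hL0]
      simp
    linarith [hg0 ▸ this]
  have hlogL : Real.log (L s) ≤ μ1 * s + K * s ^ 2 := by
    simp only [hg] at hgs; linarith
  have hLs : L s ≤ Real.exp (μ1 * s + K * s ^ 2) := by
    calc L s = Real.exp (Real.log (L s)) := (Real.exp_log (hLpos s)).symm
      _ ≤ Real.exp (μ1 * s + K * s ^ 2) := Real.exp_le_exp.2 hlogL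
  have hint : (∫ ω, Real.exp (s * (X ω - μ1)) ∂P) = L s * Real.exp (-(s * μ1)) := by
    simp only [hL]
    rw [← integral_mul_const]
    apply integral_congr_ae
    filter_upwards with ω
    rw [pow_zero, one_mul, ← Real.exp_add]
    ring_nf
  rw [hint]
  calc L s * Real.exp (-(s * μ1))
      ≤ Real.exp (μ1 * s + K * s ^ 2) * Real.exp (-(s * μ1)) := by
        apply mul_le_mul_of_nonneg_right hLs (Real.exp_pos _).le
    _ = Real.exp (s ^ 2 * b ^ 2 * c / 8) := by
        rw [← Real.exp_add, hK]
        congr 1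
        ring

end Aux19

theorem statement19 {Ω : Type*} [MeasurableSpace Ω] (P : Measure Ω) [IsProbabilityMeasure P]
    (p : ℕ) (hp : 1 ≤ p) (b : ℝ) (hb : 0 < b)
    (X : Ω → ℝ) (hX : Measurable X)
    (hXb : P {ω | X ω ∈ Set.Icc 0 b} = 1)
    (hXpos : 0 < P {ω | 0 < X ω})
    (s : ℝ) (hs : 0 ≤ s) :
    (∫ ω, Real.exp (s * (X ω - ∫ ω', X ω' ∂P)) ∂P) ≤
      Real.exp (s ^ 2 * b ^ 2 * Cp p (s * b) b (fun k => ∫ ω, (X ω) ^ k ∂P) / 8) := by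
  -- a.e. bound
  have hae : ∀ᵐ ω ∂P, X ω ∈ Set.Icc 0 b := by
    rw [ae_iff]
    have hms : MeasurableSet {ω | X ω ∈ Set.Icc 0 b} := hX measurableSet_Icc
    have hcompl : P {ω | X ω ∈ Set.Icc 0 b}ᶜ = 0 := by
      rw [measure_compl hms (measure_ne_top _ _), hXb, measure_univ, tsub_self]
    convert hcompl using 2
    rfl
  obtain ⟨q, rfl⟩ : ∃ q, p = q + 1 := ⟨p - 1, by omega⟩
  -- abbreviations
  set μf : ℕ → ℝ := fun k => ∫ ω, X ω ^ k ∂P with hμf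
  set N : ℝ := μf (q + 1) * Real.exp (s * b)
      + ∑ j ∈ Finset.range (q + 1 - 2), (s * b) ^ j / (j.factorial : ℝ)
          * (b ^ (q + 1 - j - 2) * μf (j + 2) - μf (q + 1)) with hN
  set D : ℝ := μf (q + 1) * Real.exp (s * b)
      + ∑ j ∈ Finset.range (q + 1 - 1), (s * b) ^ j / (j.factorial : ℝ)
          * (b ^ (q + 1 - j - 1) * μf (j + 1) - μf (q + 1)) with hD
  have hCp : Cp (q + 1) (s * b) b μf = (N / D) ^ 2 := rfl
  -- the series tails
  set dco : ℕ → ℝ := fun n => s ^ (n + q) / ((n + q).factorial : ℝ)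
      * (b ^ (n + q) * μf (q + 1) - b ^ q * μf (n + q + 1)) with hdco
  set aco : ℕ → ℝ := fun n => s ^ (n + q) / ((n + q).factorial : ℝ)
      * (b ^ (n + q + 1) * μf (q + 1) - b ^ q * μf (n + q + 2)) with haco
  -- split identities
  have hD_split : D = b ^ q * (∫ ω, X ω ^ 1 * Real.exp (s * X ω) ∂P) + ∑' n, dco n := by
    have h1 : D = μf (q + 1) * Real.exp (s * b)
        + ∑ j ∈ Finset.range q, (s * b) ^ j / (j.factorial : ℝ)
            * (b ^ (q - j) * μf (j + 1) - μf (q + 1)) := by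
      rw [hD]
      congr 1
      rw [show q + 1 - 1 = q from by omega]
      exact Finset.sum_congr rfl fun j _ => by rw [show q + 1 - j - 1 = q - j from by omega]
    rw [h1]
    exact denom_split μf q s b _ (expansion hX hb hae 1 s) (summable_mu hX hb hae 1 s)
  have hN_split : b * N = b ^ q * (∫ ω, X ω ^ 2 * Real.exp (s * X ω) ∂P) + ∑' n, aco n := by
    have h1 : N = μf (q + 1) * Real.exp (s * b)
        + ∑ j ∈ Finset.range (q - 1), (s * b) ^ j / (j.factorial : ℝ)
            * (b ^ (q - j - 1) * μf (j + 2) - μf (q + 1)) := by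
      rw [hN]
      congr 1
      rw [show q + 1 - 2 = q - 1 from by omega]
      exact Finset.sum_congr rfl fun j _ => by rw [show q + 1 - j - 2 = q - j - 1 from by omega]
    rw [h1]
    exact numer_split μf q s b _ (expansion hX hb hae 2 s) (summable_mu hX hb hae 2 s)
  -- summability of tails
  have hexpsum : Summable (fun j : ℕ => (s * b) ^ j / (j.factorial : ℝ)) :=
    Real.summable_pow_div_factorial (s * b)
  have hsumd : Summable dco := by
    have h1 : Summable (fun n : ℕ => μf (q + 1) * ((s * b) ^ (n + q) / ((n + q).factorial : ℝ))) :=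
      ((summable_nat_add_iff q).2 hexpsum).mul_left _
    have h2 : Summable (fun n : ℕ => b ^ q
        * (s ^ (n + q) / ((n + q).factorial : ℝ) * μf (n + q + 1))) := by
      have := (summable_nat_add_iff q).2 (summable_mu hX hb hae 1 s)
      exact this.mul_left _
    have he : dco = fun n => μf (q + 1) * ((s * b) ^ (n + q) / ((n + q).factorial : ℝ))
        - b ^ q * (s ^ (n + q) / ((n + q).factorial : ℝ) * μf (n + q + 1)) := by
      funext n; simp only [hdco]; rw [mul_pow]; ring
    rw [he]; exact h1.sub h2
  have hsuma : Summable aco := by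
    have h1 : Summable (fun n : ℕ =>
        (μf (q + 1) * b) * ((s * b) ^ (n + q) / ((n + q).factorial : ℝ))) :=
      ((summable_nat_add_iff q).2 hexpsum).mul_left _
    have h2 : Summable (fun n : ℕ => b ^ q
        * (s ^ (n + q) / ((n + q).factorial : ℝ) * μf (n + q + 2))) := by
      have := (summable_nat_add_iff q).2 (summable_mu hX hb hae 2 s)
      exact this.mul_left _
    have he : aco = fun n => (μf (q + 1) * b) * ((s * b) ^ (n + q) / ((n + q).factorial : ℝ))
        - b ^ q * (s ^ (n + q) / ((n + q).factorial : ℝ) * μf (n + q + 2)) := by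
      funext n; simp only [haco, pow_succ]; rw [mul_pow]; ring
    rw [he]; exact h1.sub h2
  -- nonnegativity of dco
  have hfacnn : ∀ n : ℕ, (0 : ℝ) ≤ s ^ (n + q) / ((n + q).factorial : ℝ) :=
    fun n => div_nonneg (pow_nonneg hs _) (Nat.cast_nonneg _)
  have hdnn : ∀ n, 0 ≤ dco n := by
    intro n
    have hm : (∫ ω, X ω ^ (n + q + 1) ∂P) ≤ b ^ n * ∫ ω, X ω ^ (q + 1) ∂P := by
      have := mu_mono hX hb hae n (q + 1)
      rwa [show n + (q + 1) = n + q + 1 from rfl] at this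
    apply mul_nonneg (hfacnn n)
    rw [sub_nonneg]
    calc b ^ q * μf (n + q + 1) ≤ b ^ q * (b ^ n * μf (q + 1)) := by
          apply mul_le_mul_of_nonneg_left hm (pow_nonneg hb.le q)
      _ = b ^ (n + q) * μf (q + 1) := by rw [pow_add]; ring
  -- termwise comparison
  have hbdco_le_aco : ∀ n, b * dco n ≤ aco n := by
    intro n
    have hm : (∫ ω, X ω ^ (n + q + 1 + 1) ∂P) ≤ b ^ 1 * ∫ ω, X ω ^ (n + q + 1) ∂P := by
      have := mu_mono hX hb hae 1 (n + q + 1)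
      rwa [show 1 + (n + q + 1) = n + q + 1 + 1 from by omega] at this
    have hm' : μf (n + q + 2) ≤ b * μf (n + q + 1) := by
      rw [show n + q + 2 = n + q + 1 + 1 from by omega]
      simpa using hm
    have hkey : aco n - b * dco n
        = s ^ (n + q) / ((n + q).factorial : ℝ) * b ^ q
          * (b * μf (n + q + 1) - μf (n + q + 2)) := by
      simp only [haco, hdco, pow_succ]
      ring
    have h2 : 0 ≤ aco n - b * dco n := by
      rw [hkey]
      apply mul_nonneg (mul_nonneg (hfacnn n) (pow_nonneg hb.le q))
      linarith
    linarith
  -- positivity of D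
  have hE1s_pos : 0 < ∫ ω, X ω ^ 1 * Real.exp (s * X ω) ∂P :=
    int_k_exp_pos hX hb hae hXpos 1 s
  have hD_pos : 0 < D := by
    rw [hD_split]
    have h1 : 0 < b ^ q * ∫ ω, X ω ^ 1 * Real.exp (s * X ω) ∂P :=
      mul_pos (pow_pos hb q) hE1s_pos
    have h2 : 0 ≤ ∑' n, dco n := tsum_nonneg hdnn
    linarith
  -- master inequality
  have hmaster : ∀ t, t ≤ s →
      (∫ ω, X ω ^ 2 * Real.exp (t * X ω) ∂P) * D
        ≤ (∫ ω, X ω ^ 1 * Real.exp (t * X ω) ∂P) * (b * N) := by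
    intro t ht
    have hE1t_nn : 0 ≤ ∫ ω, X ω ^ 1 * Real.exp (t * X ω) ∂P := by
      apply integral_nonneg_of_ae
      filter_upwards [hae] with ω hω
      have := hω.1
      positivity
    have hE2_le : (∫ ω, X ω ^ 2 * Real.exp (t * X ω) ∂P)
        ≤ b * ∫ ω, X ω ^ 1 * Real.exp (t * X ω) ∂P := by
      rw [← integral_const_mul]
      apply integral_mono_ae (int_pow_exp hX hb hae 2 t)
        ((int_pow_exp hX hb hae 1 t).const_mul b)
      filter_upwards [hae] with ω hω
      have h1 : X ω ^ 2 = X ω * X ω ^ 1 := by ring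
      have h2 : X ω * X ω ^ 1 ≤ b * X ω ^ 1 := by
        apply mul_le_mul_of_nonneg_right hω.2
        simpa using hω.1
      calc X ω ^ 2 * Real.exp (t * X ω) = X ω * X ω ^ 1 * Real.exp (t * X ω) := by
            rw [h1]
        _ ≤ b * X ω ^ 1 * Real.exp (t * X ω) := by
            apply mul_le_mul_of_nonneg_right h2 (Real.exp_pos _).le
        _ = b * (X ω ^ 1 * Real.exp (t * X ω)) := by ring
    have hcomp : ∀ n, (∫ ω, X ω ^ 2 * Real.exp (t * X ω) ∂P) * dco n
        ≤ (∫ ω, X ω ^ 1 * Real.exp (t * X ω) ∂P) * aco n := by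
      intro n
      calc (∫ ω, X ω ^ 2 * Real.exp (t * X ω) ∂P) * dco n
          ≤ (b * ∫ ω, X ω ^ 1 * Real.exp (t * X ω) ∂P) * dco n :=
            mul_le_mul_of_nonneg_right hE2_le (hdnn n)
        _ = (∫ ω, X ω ^ 1 * Real.exp (t * X ω) ∂P) * (b * dco n) := by ring
        _ ≤ (∫ ω, X ω ^ 1 * Real.exp (t * X ω) ∂P) * aco n :=
            mul_le_mul_of_nonneg_left (hbdco_le_aco n) hE1t_nn
    have htail : (∫ ω, X ω ^ 2 * Real.exp (t * X ω) ∂P) * (∑' n, dco n)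
        ≤ (∫ ω, X ω ^ 1 * Real.exp (t * X ω) ∂P) * (∑' n, aco n) := by
      rw [← tsum_mul_left, ← tsum_mul_left]
      exact Summable.tsum_le_tsum hcomp (hsumd.mul_left _) (hsuma.mul_left _)
    have hcheb := cheb hX hb hae ht
    have hhead : (∫ ω, X ω ^ 2 * Real.exp (t * X ω) ∂P)
          * (b ^ q * ∫ ω, X ω ^ 1 * Real.exp (s * X ω) ∂P)
        ≤ (∫ ω, X ω ^ 1 * Real.exp (t * X ω) ∂P)
          * (b ^ q * ∫ ω, X ω ^ 2 * Real.exp (s * X ω) ∂P) := by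
      nlinarith [mul_le_mul_of_nonneg_left hcheb (pow_nonneg hb.le q)]
    rw [hD_split, hN_split, mul_add, mul_add]
    linarith
  -- conclude via the core lemma
  rw [hCp]
  apply core hX hb hae hs ((N / D) ^ 2)
  intro t ht
  have hm := hmaster t ht
  have hE2R : (∫ ω, X ω ^ 2 * Real.exp (t * X ω) ∂P)
      ≤ (∫ ω, X ω ^ 1 * Real.exp (t * X ω) ∂P) * (b * N) / D :=
    (le_div_iff₀ hD_pos).2 hm
  have hLt : 0 < ∫ ω, X ω ^ 0 * Real.exp (t * X ω) ∂P := int_exp_pos hX hb hae t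
  have hDne : D ≠ 0 := ne_of_gt hD_pos
  set R : ℝ := b * N / D with hR
  have h1 : (∫ ω, X ω ^ 1 * Real.exp (t * X ω) ∂P) * (b * N) / D
      = R * ∫ ω, X ω ^ 1 * Real.exp (t * X ω) ∂P := by rw [hR]; ring
  rw [h1] at hE2R
  have h2 : b ^ 2 * (N / D) ^ 2 / 4 * (∫ ω, X ω ^ 0 * Real.exp (t * X ω) ∂P) ^ 2
      = (R * ∫ ω, X ω ^ 0 * Real.exp (t * X ω) ∂P) ^ 2 / 4 := by
    rw [hR]
    field_simp
  rw [h2]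
  nlinarith [sq_nonneg (R * (∫ ω, X ω ^ 0 * Real.exp (t * X ω) ∂P)
      - 2 * ∫ ω, X ω ^ 1 * Real.exp (t * X ω) ∂P),
    mul_nonneg (sub_nonneg.2 hE2R) hLt.le]
end
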